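/- arXiv:1203.1058 — 6 statements merged into one kernel-verified Lean document; each statement's English description precedes it below -/
import Mathlib

section
/- Let G be a second countable topological group, H a subgroup of G, and ρ₁ : H → G, ρ₂ : ρ₁(H) → G group homomorphisms (not assumed continuous). If each ρᵢ is a pointwise limit of a sequence of inner automorphisms of G restricted to its domain (meaning: for every finite subset F of the domain and every open set U containing the image of F under ρᵢ, some inner automorphism maps F into U), then the composite ρ₂ ∘ ρ₁ : H → G is also a pointwise limit of a sequence of inner automorphisms of G. -/
/-- A (not necessarily continuous) homomorphism `ρ` from a subgroup `H` of a topological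
group `G` into `G` is a pointwise limit of inner automorphisms of `G` if for every finite
subset `F` of `H` and every open set `U` containing `ρ(F)`, some inner automorphism
`x ↦ g x g⁻¹` of `G` maps `F` into `U`. -/
def PointwiseLimitOfInner {G : Type*} [Group G] [TopologicalSpace G]
    (H : Subgroup G) (ρ : H →* G) : Prop :=
  ∀ (F : Finset H) (U : Set G), IsOpen U → (∀ x ∈ F, ρ x ∈ U) →
    ∃ g : G, ∀ x ∈ F, g * (x : G) * g⁻¹ ∈ U

/-- Let `G` be a second countable topological group, `H ≤ G` and `ρ₁ : H → G`,
`ρ₂ : ρ₁(H) → G` group homomorphisms, each of which is a pointwise limit of inner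
automorphisms of `G`.  Then the composite `ρ₂ ∘ ρ₁ : H → G` is also a pointwise limit
of inner automorphisms of `G`. -/
theorem pointwiseLimitOfInner_comp {G : Type*} [Group G] [TopologicalSpace G]
    [IsTopologicalGroup G] [SecondCountableTopology G]
    (H : Subgroup G) (ρ₁ : H →* G) (ρ₂ : ρ₁.range →* G)
    (h₁ : PointwiseLimitOfInner H ρ₁)
    (h₂ : PointwiseLimitOfInner ρ₁.range ρ₂) :
    PointwiseLimitOfInner H (ρ₂.comp ρ₁.rangeRestrict) := by
  classical
  intro F U hU hF
  obtain ⟨g₂, hg₂⟩ := h₂ (F.image ρ₁.rangeRestrict) U hU (by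
    intro y hy
    simp only [Finset.mem_image] at hy
    obtain ⟨x, hx, rfl⟩ := hy
    exact hF x hx)
  have hV : IsOpen {y : G | g₂ * y * g₂⁻¹ ∈ U} :=
    hU.preimage (by continuity)
  obtain ⟨g₁, hg₁⟩ := h₁ F _ hV (by
    intro x hx
    exact hg₂ _ (Finset.mem_image_of_mem _ hx))
  exact ⟨g₂ * g₁, fun x hx => by
    have := hg₁ x hx
    simp only [Set.mem_setOf_eq] at this
    simpa [mul_assoc] using this⟩
end

section
/- Let X be a CAT(0) space, G a group acting by isometries on X, and Y a nonempty closed convex G-invariant subset of X such that every point of X is at distance at most D from Y for some constant D. If F is a G-invariant flat (an isometrically embedded Euclidean subspace) in X, then the nearest-point projection π : X → Y restricted to F is an isometry onto its image, and π(F) is a G-invariant flat in Y of the same dimension. -/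
/-- `m` is a midpoint of `a` and `b`. -/
def IsMidpoint {X : Type*} [MetricSpace X] (m a b : X) : Prop :=
  dist a m = dist a b / 2 ∧ dist b m = dist a b / 2

/-- A complete metric space is CAT(0) if midpoints exist and the CN-inequality of
Bruhat–Tits holds. -/
class CAT0Space (X : Type*) [MetricSpace X] : Prop where
  midpoint_exists : ∀ a b : X, ∃ m, IsMidpoint m a b
  cn_ineq : ∀ x a b m : X, IsMidpoint m a b →
    dist x m ^ 2 ≤ (dist x a ^ 2 + dist x b ^ 2) / 2 - dist a b ^ 2 / 4

/-- `γ` is a unit-speed geodesic segment from `a` to `b`, parametrised on `[0, d(a,b)]`. -/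
def IsGeodesicSegmentBetween {X : Type*} [MetricSpace X] (γ : ℝ → X) (a b : X) : Prop :=
  γ 0 = a ∧ γ (dist a b) = b ∧
    ∀ s ∈ Set.Icc 0 (dist a b), ∀ t ∈ Set.Icc 0 (dist a b), dist (γ s) (γ t) = |s - t|

/-- A subset of a metric space is convex if it contains every geodesic segment
between any two of its points. -/
def SetConvex {X : Type*} [MetricSpace X] (S : Set X) : Prop :=
  ∀ a ∈ S, ∀ b ∈ S, ∀ γ : ℝ → X, IsGeodesicSegmentBetween γ a b →
    ∀ t ∈ Set.Icc 0 (dist a b), γ t ∈ S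

/-- `F` is a flat of dimension `n`: an isometrically embedded copy of Euclidean `n`-space. -/
def IsFlat {X : Type*} [MetricSpace X] (n : ℕ) (F : Set X) : Prop :=
  ∃ φ : EuclideanSpace ℝ (Fin n) → X, Isometry φ ∧ Set.range φ = F

namespace Cat0Aux

variable {X : Type*} [MetricSpace X]

lemma midSymm {m a b : X} (h : IsMidpoint m a b) : IsMidpoint m b a :=
  ⟨by rw [dist_comm b a]; exact h.2, by rw [dist_comm b a]; exact h.1⟩

variable [CAT0Space X]

lemma midpoint_unique {m m' a b : X} (h : IsMidpoint m a b) (h' : IsMidpoint m' a b) :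
    m = m' := by
  have hcn := CAT0Space.cn_ineq m' a b m h
  have h1 : dist m' a = dist a b / 2 := by rw [dist_comm]; exact h'.1
  have h2 : dist m' b = dist a b / 2 := by rw [dist_comm]; exact h'.2
  have : dist m' m ^ 2 ≤ 0 := by rw [h1, h2] at hcn; nlinarith
  have h0 : dist m' m = 0 := by nlinarith [dist_nonneg (x := m') (y := m)]
  exact (eq_of_dist_eq_zero h0).symm

/-- Collinear point vs midpoint: if `z` is "beyond `x`" from `y`. -/
lemma dist_midpoint_collinear {m x y z : X} (hm : IsMidpoint m x y)
    (h : dist z y = dist z x + dist x y) : dist z m = dist z x + dist x y / 2 := by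
  have hcn := CAT0Space.cn_ineq z x y m hm
  have htri : dist z y ≤ dist z m + dist m y := dist_triangle _ _ _
  have hmy : dist m y = dist x y / 2 := by rw [dist_comm]; exact hm.2
  have h1 : dist z x + dist x y / 2 ≤ dist z m := by rw [hmy] at htri; linarith
  have h2 : dist z m ≤ dist z x + dist x y / 2 := by
    nlinarith [dist_nonneg (x := z) (y := m), dist_nonneg (x := z) (y := x),
      dist_nonneg (x := x) (y := y)]
  linarith

noncomputable def mp (a b : X) : X := (CAT0Space.midpoint_exists a b).choose

lemma mp_mid (a b : X) : IsMidpoint (mp a b) a b :=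
  (CAT0Space.midpoint_exists a b).choose_spec

lemma dist_mid_mid_left {m₁ m₂ a b q : X} (h1 : IsMidpoint m₁ a b) (h2 : IsMidpoint m₂ a q) :
    dist m₁ m₂ ≤ dist b q / 2 := by
  have hcn1 := CAT0Space.cn_ineq m₂ a b m₁ h1
  have hcn2 := CAT0Space.cn_ineq b a q m₂ h2
  have h2a : dist m₂ a = dist a q / 2 := by rw [dist_comm]; exact h2.1
  rw [h2a, dist_comm m₂ b] at hcn1
  rw [dist_comm b a] at hcn2
  have hd : dist m₂ m₁ ^ 2 ≤ dist b q ^ 2 / 4 := by nlinarith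
  have := dist_nonneg (x := m₂) (y := m₁)
  have := dist_nonneg (x := b) (y := q)
  rw [dist_comm m₁ m₂]
  nlinarith

lemma dist_mid_mid {m₁ m₂ a b p q : X} (h1 : IsMidpoint m₁ a b) (h2 : IsMidpoint m₂ p q) :
    dist m₁ m₂ ≤ (dist a p + dist b q) / 2 := by
  have hI := dist_mid_mid_left h1 (mp_mid a q)
  have hII := dist_mid_mid_left (midSymm h2) (midSymm (mp_mid a q))
  calc dist m₁ m₂ ≤ dist m₁ (mp a q) + dist (mp a q) m₂ := dist_triangle _ _ _
    _ ≤ dist b q / 2 + dist a p / 2 := by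
        rw [dist_comm (mp a q) m₂]; exact add_le_add hI (by rw [dist_comm p a] at hII; exact hII)
    _ = (dist a p + dist b q) / 2 := by ring


noncomputable def dy (a b : X) : ℕ → ℕ → X
  | 0, k => if k = 0 then a else b
  | (n+1), k =>
      if k % 2 = 0 then dy a b n (k / 2)
      else mp (dy a b n (k / 2)) (dy a b n (k / 2 + 1))

lemma dy_even (a b : X) (n p : ℕ) : dy a b (n+1) (2*p) = dy a b n p := by
  simp [dy, Nat.mul_mod_right, Nat.mul_div_cancel_left _ (by norm_num : 0 < 2)]

lemma dy_odd (a b : X) (n p : ℕ) :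
    dy a b (n+1) (2*p+1) = mp (dy a b n p) (dy a b n (p+1)) := by
  have h1 : (2*p+1) % 2 = 1 := by omega
  have h2 : (2*p+1) / 2 = p := by omega
  simp [dy, h1, h2]


lemma habs {i j : ℕ} (h : i ≤ j) : |(i:ℝ) - j| = (j:ℝ) - i := by
  rw [abs_sub_comm]
  exact abs_of_nonneg (by simp [Nat.cast_le.mpr h])

lemma habs' {i j : ℕ} (h : j ≤ i) : |(i:ℝ) - j| = (i:ℝ) - j :=
  abs_of_nonneg (by simp [Nat.cast_le.mpr h])

lemma dy_dist (a b : X) : ∀ n, ∀ i ≤ 2^n, ∀ j ≤ 2^n,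
    dist (dy a b n i) (dy a b n j) = |(i:ℝ) - j| * (dist a b / 2^n) := by
  intro n
  induction n with
  | zero =>
    intro i hi j hj
    norm_num at hi hj
    interval_cases i <;> interval_cases j <;>
      simp [dy, dist_comm a b] <;> norm_num
  | succ n ih =>
    have h2n : (2:ℝ)^n ≠ 0 := by positivity
    have hstep : dist a b / 2^n = 2 * (dist a b / 2^(n+1)) := by
      rw [pow_succ]; field_simp
    set δ := dist a b / 2^(n+1) with hδ
    have hδ0 : 0 ≤ δ := by positivity
    have key : ∀ p q : ℕ, p ≤ 2^n → q + 1 ≤ 2^n →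
        dist (dy a b n p) (mp (dy a b n q) (dy a b n (q+1)))
          = |2*(p:ℝ) - (2*q+1)| * δ := by
      intro p q hp hq
      rcases le_or_gt p q with hpq | hpq
      · have hzx := ih p hp q (by omega)
        have hzy := ih p hp (q+1) hq
        have hxy := ih q (by omega) (q+1) hq
        have hcol : dist (dy a b n p) (dy a b n (q+1))
            = dist (dy a b n p) (dy a b n q) + dist (dy a b n q) (dy a b n (q+1)) := by
          rw [hzx, hzy, hxy, habs hpq, habs (by omega : p ≤ q + 1), habs (by omega : q ≤ q + 1)]
          push_cast; ring
        have hres := dist_midpoint_collinear (mp_mid (dy a b n q) (dy a b n (q+1))) hcol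
        rw [hres, hzx, hxy, habs hpq, habs (by omega : q ≤ q + 1), hstep,
          show |2*(p:ℝ) - (2*q+1)| = (2*q+1) - 2*p by
            rw [abs_sub_comm]
            refine abs_of_nonneg ?_
            have : (p:ℝ) ≤ q := Nat.cast_le.mpr hpq
            nlinarith]
        push_cast; ring
      · have hzx := ih p hp (q+1) hq
        have hzy := ih p hp q (by omega)
        have hxy := ih (q+1) hq q (by omega)
        have hcol : dist (dy a b n p) (dy a b n q)
            = dist (dy a b n p) (dy a b n (q+1)) + dist (dy a b n (q+1)) (dy a b n q) := by
          rw [hzx, hzy, hxy, habs' (by omega : q ≤ p), habs' (by omega : q + 1 ≤ p),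
            habs' (by omega : q ≤ q + 1)]
          push_cast; ring
        have hres := dist_midpoint_collinear
          (midSymm (mp_mid (dy a b n q) (dy a b n (q+1)))) hcol
        rw [hres, hzx, hxy, habs' (by omega : q + 1 ≤ p), habs' (by omega : q ≤ q + 1),
          hstep, show |2*(p:ℝ) - (2*q+1)| = 2*p - (2*q+1) by
            refine abs_of_nonneg ?_
            have : ((q:ℝ)+1) ≤ p := by exact_mod_cast (by omega : q + 1 ≤ p)
            nlinarith]
        push_cast; ring
    have key2 : ∀ p q : ℕ, p + 1 ≤ 2^n → q + 1 ≤ 2^n → p < q →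
        dist (mp (dy a b n p) (dy a b n (p+1))) (mp (dy a b n q) (dy a b n (q+1)))
          = |(2*(p:ℝ)+1) - (2*q+1)| * δ := by
      intro p q hp hq hpq
      have hc2 : (p:ℝ) + 1 ≤ q := by exact_mod_cast (by omega : p + 1 ≤ q)
      have hz1 := key p q (by omega) hq
      have hz2 := key (p+1) q hp hq
      have hxy := ih (p+1) hp p (by omega)
      push_cast at hz1 hz2 hxy
      rw [show |2*(p:ℝ) - (2*(q:ℝ)+1)| = (2*(q:ℝ)+1) - 2*(p:ℝ) by
        rw [abs_sub_comm]; exact abs_of_nonneg (by nlinarith)] at hz1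
      rw [show |2*((p:ℝ)+1) - (2*(q:ℝ)+1)| = (2*(q:ℝ)+1) - 2*((p:ℝ)+1) by
        rw [abs_sub_comm]; exact abs_of_nonneg (by nlinarith)] at hz2
      rw [show |(p:ℝ) + 1 - (p:ℝ)| = 1 by
        rw [add_sub_cancel_left, abs_one]] at hxy
      have hcol : dist (mp (dy a b n q) (dy a b n (q+1))) (dy a b n p)
          = dist (mp (dy a b n q) (dy a b n (q+1))) (dy a b n (p+1))
            + dist (dy a b n (p+1)) (dy a b n p) := by
        rw [dist_comm _ (dy a b n p), dist_comm _ (dy a b n (p+1)), hz1, hz2, hxy, hstep]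
        ring
      have hres := dist_midpoint_collinear
        (midSymm (mp_mid (dy a b n p) (dy a b n (p+1)))) hcol
      rw [dist_comm]
      rw [hres, dist_comm _ (dy a b n (p+1)), hz2, hxy, hstep,
        show |(2*(p:ℝ)+1) - (2*(q:ℝ)+1)| = (2*(q:ℝ)+1) - (2*(p:ℝ)+1) by
          rw [abs_sub_comm]; exact abs_of_nonneg (by nlinarith)]
      push_cast
      ring
    intro i hi j hj
    have hpow2 : 2^(n+1) = 2 * 2^n := by rw [pow_succ]; ring
    rcases Nat.even_or_odd i with ⟨p, hp⟩ | ⟨p, hp⟩ <;>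
      rcases Nat.even_or_odd j with ⟨q, hq⟩ | ⟨q, hq⟩
    · subst hp; subst hq
      rw [show p+p = 2*p from (two_mul p).symm, show q+q = 2*q from (two_mul q).symm]
      rw [dy_even, dy_even, ih p (by omega) q (by omega), hstep]
      push_cast
      rw [show (2:ℝ)*p - 2*q = 2*((p:ℝ) - q) by ring, abs_mul]
      norm_num
      ring
    · subst hp; subst hq
      rw [show p+p = 2*p from (two_mul p).symm]
      rw [dy_even, dy_odd, key p q (by omega) (by omega)]
      push_cast
      ring_nf
    · subst hp; subst hq
      rw [show q+q = 2*q from (two_mul q).symm]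
      rw [dy_odd, dy_even, dist_comm, key q p (by omega) (by omega), abs_sub_comm]
      push_cast
      ring_nf
    · subst hp; subst hq
      rw [dy_odd, dy_odd]
      rcases lt_trichotomy p q with h | h | h
      · rw [key2 p q (by omega) (by omega) h]
        push_cast; ring_nf
      · subst h
        simp
      · rw [dist_comm, key2 q p (by omega) (by omega) h, abs_sub_comm]
        push_cast; ring_nf


lemma dy_left (a b : X) (n : ℕ) : dy a b n 0 = a := by
  induction n with
  | zero => simp [dy]
  | succ n ih => simpa using (dy_even a b n 0).trans ih

lemma dy_right (a b : X) (n : ℕ) : dy a b n (2^n) = b := by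
  induction n with
  | zero => simp [dy]
  | succ n ih =>
    rw [show 2^(n+1) = 2*2^n by rw [pow_succ]; ring, dy_even, ih]

open Filter Topology in
lemma exists_geodesic [CompleteSpace X] (a b : X) :
    ∃ γ : ℝ → X, IsGeodesicSegmentBetween γ a b := by
  rcases eq_or_ne (dist a b) 0 with hd | hd
  · refine ⟨fun _ => a, rfl, (eq_of_dist_eq_zero hd).symm ▸ rfl, ?_⟩
    intro s hs t ht
    rw [hd] at hs ht
    have hs0 : s = 0 := le_antisymm hs.2 hs.1
    have ht0 : t = 0 := le_antisymm ht.2 ht.1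
    simp [hs0, ht0]
  · have hdpos : 0 < dist a b := lt_of_le_of_ne dist_nonneg (Ne.symm hd)
    set d := dist a b with hdd
    set u : ℝ → ℝ := fun t => max 0 (min t d) / d with hu
    have hu0 : ∀ t, 0 ≤ u t := fun t => div_nonneg (le_max_left _ _) hdpos.le
    have hu1 : ∀ t, u t ≤ 1 := fun t =>
      div_le_one_of_le₀ (max_le hdpos.le (min_le_right _ _)) hdpos.le
    set k : ℝ → ℕ → ℕ := fun t n => ⌊u t * 2^n⌋₊ with hk
    have hxnn : ∀ t n, 0 ≤ u t * 2^n := fun t n => by positivity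
    have hkle : ∀ t n, k t n ≤ 2^n := by
      intro t n
      have h1 : u t * 2^n ≤ ((2^n : ℕ) : ℝ) := by
        push_cast
        nlinarith [hu1 t, pow_pos (by norm_num : (0:ℝ) < 2) n]
      calc k t n ≤ ⌊((2^n : ℕ) : ℝ)⌋₊ := Nat.floor_le_floor h1
        _ = 2^n := Nat.floor_natCast _
    have hdouble : ∀ t n, k t (n+1) = 2 * k t n ∨ k t (n+1) = 2 * k t n + 1 := by
      intro t n
      have h1 : ((k t n : ℕ) : ℝ) ≤ u t * 2^n := Nat.floor_le (hxnn t n)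
      have h2 : u t * 2^n < k t n + 1 := Nat.lt_floor_add_one _
      have hx1 : u t * 2^(n+1) = 2 * (u t * 2^n) := by rw [pow_succ]; ring
      have hlow : 2 * k t n ≤ k t (n+1) := by
        apply Nat.le_floor
        rw [hx1]; push_cast; nlinarith
      have hhigh : k t (n+1) < 2 * k t n + 2 := by
        apply (Nat.floor_lt (hxnn t (n+1))).mpr
        rw [hx1]; push_cast; nlinarith
      omega
    have hstepd : ∀ t n, dist (dy a b n (k t n)) (dy a b (n+1) (k t (n+1))) ≤ d / 2^(n+1) := by
      intro t n
      have hb1 : 2 * k t n ≤ 2^(n+1) := by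
        have := hkle t n; rw [pow_succ]; omega
      rcases hdouble t n with hcase | hcase
      · rw [hcase, dy_even, dist_self]
        positivity
      · rw [hcase, ← dy_even a b n (k t n),
          dy_dist a b (n+1) (2 * k t n) hb1 (2 * k t n + 1)
            (by have := hkle t (n+1); omega),
          show |((2 * k t n : ℕ):ℝ) - ((2 * k t n + 1 : ℕ):ℝ)| = 1 by
            push_cast; rw [abs_sub_comm]; norm_num,
          one_mul]
    have hcauchy : ∀ t, CauchySeq (fun n => dy a b n (k t n)) := by
      intro t
      apply cauchySeq_of_le_geometric (1/2 : ℝ) d (by norm_num)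
      intro n
      refine le_trans (hstepd t n) ?_
      have he : d / 2^(n+1) = d * (1/2)^n * (1/2) := by
        rw [div_pow, one_pow, pow_succ]
        field_simp
      rw [he]
      nlinarith [mul_nonneg hdpos.le (pow_nonneg (by norm_num : (0:ℝ) ≤ 1/2) n)]
    choose γ hγ using fun t => cauchySeq_tendsto_of_complete (hcauchy t)
    have happrox : ∀ s, s ∈ Set.Icc 0 d → ∀ n : ℕ,
        |(k s n : ℝ) * (d / 2^n) - s| ≤ d / 2^n := by
      intro s hs n
      have hus : u s = s / d := by
        simp only [hu]
        rw [min_eq_left hs.2, max_eq_right hs.1]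
      have hp : (0:ℝ) < 2^n := by positivity
      have h1 : ((k s n : ℕ) : ℝ) ≤ u s * 2^n := Nat.floor_le (hxnn s n)
      have h2 : u s * 2^n < k s n + 1 := Nat.lt_floor_add_one _
      have hx : u s * 2^n * (d / 2^n) = s := by
        rw [hus]; field_simp
      have hq : (0:ℝ) < d / 2^n := by positivity
      have hm1 := mul_le_mul_of_nonneg_right h1 hq.le
      have hm2 := mul_lt_mul_of_pos_right h2 hq
      rw [abs_le]
      constructor <;> nlinarith
    have hmain : ∀ s ∈ Set.Icc 0 d, ∀ t ∈ Set.Icc 0 d, dist (γ s) (γ t) = |s - t| := by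
      intro s hs t ht
      have lim1 : Tendsto (fun n => dist (dy a b n (k s n)) (dy a b n (k t n)))
          atTop (𝓝 (dist (γ s) (γ t))) := (hγ s).dist (hγ t)
      have lim2 : Tendsto (fun n => dist (dy a b n (k s n)) (dy a b n (k t n)))
          atTop (𝓝 |s - t|) := by
        rw [tendsto_iff_dist_tendsto_zero]
        apply squeeze_zero (fun n => dist_nonneg) (g := fun n => 2 * (d / 2^n))
        · intro n
          rw [dy_dist a b n (k s n) (hkle s n) (k t n) (hkle t n)]
          have h1 := abs_le.mp (happrox s hs n)
          have h2 := abs_le.mp (happrox t ht n)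
          have he : |(k s n : ℝ) - (k t n : ℝ)| * (d / 2^n)
              = |(k s n : ℝ) * (d / 2^n) - (k t n : ℝ) * (d / 2^n)| := by
            rw [← sub_mul, abs_mul, abs_of_nonneg (by positivity : (0:ℝ) ≤ d / 2^n)]
          rw [Real.dist_eq, he]
          set x := (k s n : ℝ) * (d / 2^n) - (k t n : ℝ) * (d / 2^n) with hxdef
          have hXY : |x - (s - t)| ≤ 2 * (d / 2^n) := by
            rw [abs_le]
            constructor <;> linarith [h1.1, h1.2, h2.1, h2.2]
          have hu1' := abs_sub_abs_le_abs_sub x (s - t)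
          have hu2' := abs_sub_abs_le_abs_sub (s - t) x
          rw [abs_sub_comm (s - t) x] at hu2'
          rw [abs_le]
          exact ⟨by linarith, by linarith⟩
        · have heq : (fun n : ℕ => 2 * (d / 2^n)) = fun n : ℕ => (2*d) * (1/2)^n := by
            funext n
            rw [div_pow, one_pow]
            ring
          rw [heq]
          have hp := tendsto_pow_atTop_nhds_zero_of_lt_one
            (by norm_num : (0:ℝ) ≤ 1/2) (by norm_num : (1/2:ℝ) < 1)
          simpa using hp.const_mul (2*d)
      exact tendsto_nhds_unique lim1 lim2
    have hy0 : ∀ n : ℕ, dy a b n (k 0 n) = a := by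
      intro n
      have hu00 : u 0 = 0 := by
        simp only [hu]
        rw [min_eq_left hdpos.le]
        simp
      have hk0 : k 0 n = 0 := by
        simp only [hk, hu00, zero_mul, Nat.floor_zero]
      rw [hk0, dy_left]
    have hγ0 : γ 0 = a :=
      tendsto_nhds_unique (hγ 0) (by simp only [hy0]; exact tendsto_const_nhds)
    have hyd : ∀ n : ℕ, dy a b n (k d n) = b := by
      intro n
      have hud : u d = 1 := by
        simp only [hu]
        rw [min_self, max_eq_right hdpos.le, div_self hd]
      have hcast : ((2^n : ℕ) : ℝ) = (2:ℝ)^n := by push_cast; ring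
      have hkd : k d n = 2^n := by
        simp only [hk, hud, one_mul]
        rw [← hcast, Nat.floor_natCast]
      rw [hkd, dy_right]
    have hγd : γ d = b :=
      tendsto_nhds_unique (hγ d) (by simp only [hyd]; exact tendsto_const_nhds)
    exact ⟨γ, hγ0, hγd, hmain⟩


lemma midpoint_mem [CompleteSpace X] {Y : Set X} (hY : SetConvex Y) {a b m : X}
    (ha : a ∈ Y) (hb : b ∈ Y) (hm : IsMidpoint m a b) : m ∈ Y := by
  obtain ⟨γ, hγ⟩ := exists_geodesic a b
  have hd : (0:ℝ) ≤ dist a b := dist_nonneg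
  have hhalf : dist a b / 2 ∈ Set.Icc 0 (dist a b) := ⟨by positivity, by linarith⟩
  have hmem := hY a ha b hb γ hγ _ hhalf
  have hmid : IsMidpoint (γ (dist a b / 2)) a b := by
    constructor
    · calc dist a (γ (dist a b / 2)) = dist (γ 0) (γ (dist a b / 2)) := by rw [hγ.1]
        _ = dist a b / 2 := by
            rw [hγ.2.2 0 ⟨le_refl 0, hd⟩ _ hhalf, abs_of_nonpos (by linarith)]
            ring
    · calc dist b (γ (dist a b / 2))
          = dist (γ (dist a b)) (γ (dist a b / 2)) := by rw [hγ.2.1]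
        _ = dist a b / 2 := by
            rw [hγ.2.2 (dist a b) ⟨hd, le_refl _⟩ _ hhalf, abs_of_nonneg (by linarith)]
            ring
  rw [midpoint_unique hm hmid]
  exact hmem

lemma pyth [CompleteSpace X] {Y : Set X} (hY : SetConvex Y) {x p y : X}
    (hp : p ∈ Y) (hyY : y ∈ Y) (hnear : ∀ z ∈ Y, dist x p ≤ dist x z) :
    dist x p ^ 2 + dist p y ^ 2 / 2 ≤ dist x y ^ 2 := by
  have hm := mp_mid p y
  have hmem := midpoint_mem hY hp hyY hm
  have hcn := CAT0Space.cn_ineq x p y (mp p y) hm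
  have h1 := hnear _ hmem
  nlinarith [dist_nonneg (x := x) (y := p), dist_nonneg (x := x) (y := mp p y)]

lemma nearest_unique [CompleteSpace X] {Y : Set X} (hY : SetConvex Y) {x p q : X}
    (hp : p ∈ Y) (hq : q ∈ Y) (hnp : ∀ z ∈ Y, dist x p ≤ dist x z)
    (hnq : ∀ z ∈ Y, dist x q ≤ dist x z) : p = q := by
  have hm := mp_mid p q
  have hmem := midpoint_mem hY hp hq hm
  have hcn := CAT0Space.cn_ineq x p q (mp p q) hm
  have h1 := hnp _ hmem
  have h2 : dist x p = dist x q := le_antisymm (hnp q hq) (hnq p hp)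
  have h3 : dist p q ^ 2 ≤ 0 := by
    nlinarith [dist_nonneg (x := x) (y := p), dist_nonneg (x := x) (y := mp p q)]
  have h4 := dist_nonneg (x := p) (y := q)
  exact eq_of_dist_eq_zero (by nlinarith)

end Cat0Aux

open Cat0Aux

/-- Let `X` be a complete CAT(0) space with an isometric action of a group `G`, and let
`Y ⊆ X` be a nonempty closed convex `G`-invariant subset of finite coradius (every point
of `X` is at distance at most `D` from `Y`).  If `F` is a `G`-invariant flat in `X` and
`π` is the nearest-point projection onto `Y`, then `π` restricted to `F` is an isometry
onto its image, and `π(F)` is a `G`-invariant flat in `Y` of the same dimension. -/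
theorem flat_projects_to_flat {X G : Type*} [MetricSpace X] [CompleteSpace X] [CAT0Space X]
    [Group G] [MulAction G X] (hiso : ∀ g : G, Isometry (fun x : X => g • x))
    (Y : Set X) (hYne : Y.Nonempty) (hYcl : IsClosed Y) (hYconv : SetConvex Y)
    (hYinv : ∀ (g : G) (x : X), x ∈ Y → g • x ∈ Y)
    (D : ℝ) (hD : ∀ x : X, Metric.infDist x Y ≤ D)
    (π : X → X) (hπmem : ∀ x, π x ∈ Y)
    (hπnear : ∀ x, ∀ y ∈ Y, dist x (π x) ≤ dist x y)
    (n : ℕ) (F : Set X) (hF : IsFlat n F)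
    (hFinv : ∀ (g : G) (x : X), x ∈ F → g • x ∈ F) :
    (∀ a ∈ F, ∀ b ∈ F, dist (π a) (π b) = dist a b) ∧
      π '' F ⊆ Y ∧ IsFlat n (π '' F) ∧
      ∀ (g : G) (x : X), x ∈ π '' F → g • x ∈ π '' F := by
  obtain ⟨φ, hφ, hrange⟩ := hF
  set f : EuclideanSpace ℝ (Fin n) → ℝ := fun v => dist (φ v) (π (φ v)) with hf
  have hfD : ∀ v, f v ≤ D := by
    intro v
    refine le_trans ?_ (hD (φ v))
    by_contra h
    push_neg at h
    obtain ⟨z, hzY, hz⟩ := (Metric.infDist_lt_iff hYne).mp h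
    exact absurd (hπnear (φ v) z hzY) (by simp only [hf] at hz ⊢; linarith)
  have hmidE : ∀ u v : EuclideanSpace ℝ (Fin n),
      IsMidpoint (φ (midpoint ℝ u v)) (φ u) (φ v) := by
    intro u v
    constructor
    · rw [hφ.dist_eq, hφ.dist_eq, dist_left_midpoint]
      rw [Real.norm_ofNat]
      ring
    · rw [hφ.dist_eq, hφ.dist_eq, dist_right_midpoint]
      rw [Real.norm_ofNat]
      ring
  have hconv : ∀ u v, f (midpoint ℝ u v) ≤ (f u + f v) / 2 := by
    intro u v
    have hmY : mp (π (φ u)) (π (φ v)) ∈ Y :=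
      midpoint_mem hYconv (hπmem _) (hπmem _) (mp_mid _ _)
    refine le_trans (hπnear _ _ hmY) ?_
    exact dist_mid_mid (hmidE u v) (mp_mid _ _)
  have hconst : ∀ u v, f u = f v := by
    have hle : ∀ u v, f v ≤ f u := by
      intro u v
      by_contra hlt
      push_neg at hlt
      have hεpos : 0 < f v - f u := by linarith
      set w : ℕ → EuclideanSpace ℝ (Fin n) := fun j => u + (j:ℝ) • (v - u) with hw
      have hw0 : w 0 = u := by simp [hw]
      have hw1 : w 1 = v := by simp [hw]
      have hwmid : ∀ j : ℕ, midpoint ℝ (w j) (w (j+2)) = w (j+1) := by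
        intro j
        rw [midpoint_eq_smul_add, invOf_eq_inv]
        simp only [hw]
        push_cast
        module
      have hstep : ∀ j : ℕ, f v - f u ≤ f (w (j+1)) - f (w j) := by
        intro j
        induction j with
        | zero => rw [hw0, hw1]
        | succ j ih =>
          have h1 := hconv (w j) (w (j+2))
          rw [hwmid j] at h1
          linarith
      have hgrow : ∀ j : ℕ, f u + (j:ℝ) * (f v - f u) ≤ f (w j) := by
        intro j
        induction j with
        | zero => simp [hw0]
        | succ j ih =>
          have h1 := hstep j
          push_cast
          linarith
      obtain ⟨m, hm⟩ := exists_nat_gt ((D - f u) / (f v - f u))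
      have h1 := hgrow m
      have h2 := hfD (w m)
      have h3 : (D - f u) / (f v - f u) * (f v - f u) < m * (f v - f u) :=
        mul_lt_mul_of_pos_right hm hεpos
      rw [div_mul_cancel₀ _ (ne_of_gt hεpos)] at h3
      linarith
    intro u v
    exact le_antisymm (hle v u) (hle u v)
  have hiso_line : ∀ u v, dist (π (φ u)) (π (φ v)) = dist (φ u) (φ v) := by
    intro u v
    set s := dist (φ u) (φ v) with hs
    set x : ℕ → X := fun j => φ (u + (j:ℝ) • (v - u)) with hx
    have hx0 : x 0 = φ u := by simp [hx]
    have hx1 : x 1 = φ v := by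
      simp only [hx]
      congr 1
      module
    have hxd : ∀ j l : ℕ, dist (x j) (x l) = |(j:ℝ) - l| * s := by
      intro j l
      have hsub : (u + (j:ℝ) • (v - u)) - (u + (l:ℝ) • (v - u))
          = ((j:ℝ) - l) • (v - u) := by module
      simp only [hx]
      rw [hφ.dist_eq, dist_eq_norm, hsub, norm_smul, Real.norm_eq_abs, hs, hφ.dist_eq,
        dist_eq_norm, norm_sub_rev u v]
    have hmidx : ∀ j : ℕ, IsMidpoint (x (j+1)) (x j) (x (j+2)) := by
      intro j
      constructor
      · rw [hxd, hxd]
        push_cast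
        rw [show (j:ℝ) - (j+1) = -1 by ring, show (j:ℝ) - (j+2) = -2 by ring]
        norm_num
      · rw [hxd, hxd]
        push_cast
        rw [show ((j:ℝ)+2) - (j+1) = 1 by ring, show (j:ℝ) - (j+2) = -2 by ring]
        norm_num
    set c := dist (φ u) (π (φ u)) with hcdef
    have hc : ∀ j : ℕ, dist (x j) (π (x j)) = c := by
      intro j
      exact hconst (u + (j:ℝ) • (v - u)) u
    set p : ℕ → X := fun j => π (x j) with hp
    have hmidp : ∀ j : ℕ, IsMidpoint (p (j+1)) (p j) (p (j+2)) := by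
      intro j
      have hmY : mp (p j) (p (j+2)) ∈ Y :=
        midpoint_mem hYconv (hπmem _) (hπmem _) (mp_mid _ _)
      have h1 : dist (x (j+1)) (mp (p j) (p (j+2))) ≤ c := by
        refine le_trans (dist_mid_mid (hmidx j) (mp_mid _ _)) ?_
        have e1 := hc j
        have e2 := hc (j+2)
        simp only [hp]
        linarith
      have h2 := pyth hYconv (hπmem (x (j+1))) hmY (fun z hz => hπnear (x (j+1)) z hz)
      have h3 : dist (p (j+1)) (mp (p j) (p (j+2))) = 0 := by
        have hcc := hc (j+1)
        have h4 := dist_nonneg (x := p (j+1)) (y := mp (p j) (p (j+2)))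
        have h5 := dist_nonneg (x := x (j+1)) (y := mp (p j) (p (j+2)))
        simp only [hp] at h4 ⊢
        nlinarith
      rw [eq_of_dist_eq_zero h3]
      exact mp_mid _ _
    set δ := dist (p 0) (p 1) with hδdef
    have hsteps : ∀ j : ℕ, dist (p j) (p (j+1)) = δ := by
      intro j
      induction j with
      | zero => rfl
      | succ j ih =>
        have h1 := (hmidp j).1
        have h2 := (hmidp j).2
        rw [dist_comm (p (j+2))] at h2
        exact h2.trans (h1.symm.trans ih)
    have hline : ∀ j : ℕ, dist (p 0) (p j) = (j:ℝ) * δ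
        ∧ dist (p 0) (p (j+1)) = ((j:ℝ)+1) * δ := by
      intro j
      induction j with
      | zero =>
        constructor
        · simp
        · rw [← hδdef]; norm_num
      | succ j ih =>
        have hnext : dist (p 0) (p (j+2)) = ((j:ℝ)+2) * δ := by
          have hcn := CAT0Space.cn_ineq (p 0) (p j) (p (j+2)) (p (j+1)) (hmidp j)
          have h2δ : dist (p j) (p (j+2)) = 2*δ := by
            have h1 := (hmidp j).1
            rw [hsteps j] at h1
            linarith
          have hδ0 : (0:ℝ) ≤ δ := hδdef ▸ dist_nonneg
          have hupper : dist (p 0) (p (j+2)) ≤ ((j:ℝ)+2)*δ := by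
            calc dist (p 0) (p (j+2))
                ≤ dist (p 0) (p (j+1)) + dist (p (j+1)) (p (j+2)) := dist_triangle _ _ _
              _ = ((j:ℝ)+2)*δ := by rw [ih.2, hsteps (j+1)]; ring
          have hlower : ((j:ℝ)+2)*δ ≤ dist (p 0) (p (j+2)) := by
            rw [ih.1, ih.2, h2δ] at hcn
            nlinarith [dist_nonneg (x := p 0) (y := p (j+2)),
              sq_nonneg (dist (p 0) (p (j+2)) - ((j:ℝ)+2)*δ),
              sq_nonneg (dist (p 0) (p (j+2)) + ((j:ℝ)+2)*δ)]
          linarith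
        constructor
        · rw [ih.2]; push_cast; ring
        · rw [hnext]; push_cast; ring
    have hboundN : ∀ N : ℕ, |(N:ℝ)*δ - (N:ℝ)*s| ≤ 2*c := by
      intro N
      have hA : dist (x 0) (x N) = (N:ℝ) * s := by
        rw [hxd 0 N, abs_sub_comm, habs' (by omega : (0:ℕ) ≤ N)]
        norm_num
      have hB := (hline N).1
      have hc0 := hc 0
      have hcN := hc N
      have h1 : dist (x 0) (x N) ≤ dist (x 0) (p 0) + dist (p 0) (p N) + dist (p N) (x N) :=
        dist_triangle4 _ _ _ _
      have h2 : dist (p 0) (p N) ≤ dist (p 0) (x 0) + dist (x 0) (x N) + dist (x N) (p N) :=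
        dist_triangle4 _ _ _ _
      rw [dist_comm (p 0) (x 0)] at h2
      rw [dist_comm (p N) (x N)] at h1
      simp only [hp] at hB h1 h2
      rw [abs_le]
      constructor <;> nlinarith
    have hfinal : δ = s := by
      by_contra hne
      have hεpos : 0 < |δ - s| := abs_pos.mpr (sub_ne_zero.mpr hne)
      obtain ⟨N, hN⟩ := exists_nat_gt (2*c / |δ - s|)
      have h1 := hboundN N
      have h2 : 2*c < (N:ℝ) * |δ - s| := by
        have h3 := (div_lt_iff₀ hεpos).mp hN
        linarith
      rw [show (N:ℝ)*δ - (N:ℝ)*s = (N:ℝ)*(δ - s) by ring, abs_mul,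
        abs_of_nonneg (Nat.cast_nonneg N)] at h1
      linarith
    have e0 : p 0 = π (φ u) := by rw [hp]; simp only []; rw [hx0]
    have e1 : p 1 = π (φ v) := by rw [hp]; simp only []; rw [hx1]
    rw [← e0, ← e1, ← hδdef, hfinal]
  have hisoF : ∀ a ∈ F, ∀ b ∈ F, dist (π a) (π b) = dist a b := by
    intro a ha b hb
    rw [← hrange] at ha hb
    obtain ⟨u, rfl⟩ := ha
    obtain ⟨v, rfl⟩ := hb
    rw [hiso_line u v]
  refine ⟨hisoF, ?_, ?_, ?_⟩
  · rintro z ⟨a, ha, rfl⟩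
    exact hπmem a
  · refine ⟨π ∘ φ, Isometry.of_dist_eq ?_, ?_⟩
    · intro u v
      have h1 : dist ((π ∘ φ) u) ((π ∘ φ) v) = dist (π (φ u)) (π (φ v)) := rfl
      rw [h1, hiso_line u v, hφ.dist_eq]
    · rw [Set.range_comp, hrange]
  · rintro g z ⟨a, ha, rfl⟩
    have hgY : g • π a ∈ Y := hYinv g _ (hπmem a)
    have hgnear : ∀ z' ∈ Y, dist (g • a) (g • π a) ≤ dist (g • a) z' := by
      intro z' hz'
      have h1 : dist (g • a) (g • π a) = dist a (π a) := (hiso g).dist_eq a (π a)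
      have h2 : g⁻¹ • z' ∈ Y := hYinv g⁻¹ z' hz'
      have h3 : dist a (π a) ≤ dist a (g⁻¹ • z') := hπnear a _ h2
      have h4 : dist (g • a) z' = dist a (g⁻¹ • z') := by
        have h5 := (hiso g).dist_eq a (g⁻¹ • z')
        rw [smul_inv_smul] at h5
        exact h5
      rw [h1, h4]
      exact h3
    have hswap : g • π a = π (g • a) :=
      nearest_unique hYconv hgY (hπmem (g • a)) hgnear (fun z' hz' => hπnear (g • a) z' hz')
    rw [hswap]
    exact ⟨g • a, hFinv g a ha, rfl⟩
end

section
/- Let X be a CAT(0) space, Y ⊆ X closed, convex, with sup_{x∈X} d(x,Y) = D < ∞, and let F ⊆ X be a flat on which the function x ↦ d(x,Y) is constant. Then the image π(F) of F under the nearest-point projection π : X → Y is convex. -/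
section Aux

variable {X : Type*} [MetricSpace X] [CAT0Space X]

lemma IsMidpoint.symm {m a b : X} (h : IsMidpoint m a b) : IsMidpoint m b a :=
  ⟨by rw [h.2, dist_comm], by rw [h.1, dist_comm]⟩

/-- midpoints with a common endpoint -/
lemma mid_dist_common {a₁ a₂ b m₁ m₂ : X} (h₁ : IsMidpoint m₁ a₁ b) (h₂ : IsMidpoint m₂ a₂ b) :
    dist m₁ m₂ ≤ dist a₁ a₂ / 2 := by
  have c₁ := CAT0Space.cn_ineq m₁ a₂ b m₂ h₂
  have c₂ := CAT0Space.cn_ineq a₂ a₁ b m₁ h₁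
  have e₁ := h₁.2
  have d1 : (0:ℝ) ≤ dist m₁ m₂ := dist_nonneg
  have d2 : (0:ℝ) ≤ dist a₁ a₂ := dist_nonneg
  rw [dist_comm m₁ a₂, dist_comm m₁ b, e₁] at c₁
  rw [dist_comm a₂ a₁] at c₂
  have key : dist m₁ m₂ ^ 2 ≤ (dist a₁ a₂ / 2) ^ 2 := by nlinarith
  calc dist m₁ m₂ = √(dist m₁ m₂ ^ 2) := by rw [Real.sqrt_sq d1]
    _ ≤ √((dist a₁ a₂ / 2) ^ 2) := Real.sqrt_le_sqrt key
    _ = dist a₁ a₂ / 2 := Real.sqrt_sq (by linarith)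

/-- midpoint convexity of the distance between two segments -/
lemma mid_dist_pair {a₁ b₁ a₂ b₂ m₁ m₂ : X} (h₁ : IsMidpoint m₁ a₁ b₁)
    (h₂ : IsMidpoint m₂ a₂ b₂) : dist m₁ m₂ ≤ (dist a₁ a₂ + dist b₁ b₂) / 2 := by
  obtain ⟨q, hq⟩ := CAT0Space.midpoint_exists a₂ b₁
  have t₁ : dist m₁ q ≤ dist a₁ a₂ / 2 := mid_dist_common h₁ hq
  have t₂ : dist q m₂ ≤ dist b₁ b₂ / 2 := mid_dist_common hq.symm h₂.symm
  calc dist m₁ m₂ ≤ dist m₁ q + dist q m₂ := dist_triangle _ _ _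
    _ ≤ _ := by linarith


end Aux

section Dyadic

variable {X : Type*} [MetricSpace X] [CAT0Space X]

/-- a chosen midpoint -/
noncomputable def cmid (a b : X) : X := (CAT0Space.midpoint_exists a b).choose

lemma cmid_spec (a b : X) : IsMidpoint (cmid a b) a b :=
  (CAT0Space.midpoint_exists a b).choose_spec

/-- dyadic subdivision points: `dy p q n k` is the point at parameter `k/2^n` on the
dyadic interpolation between `p` and `q`. -/
noncomputable def dy (p q : X) : ℕ → ℕ → X
  | 0, k => if k = 0 then p else q
  | (n+1), k => if k % 2 = 0 then dy p q n (k / 2)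
      else cmid (dy p q n (k / 2)) (dy p q n (k / 2 + 1))

variable (p q : X)

lemma dy_even (n j : ℕ) : dy p q (n+1) (2*j) = dy p q n j := by
  simp [dy, Nat.mul_div_cancel_left, Nat.mul_mod_right]

lemma dy_odd (n j : ℕ) :
    dy p q (n+1) (2*j+1) = cmid (dy p q n j) (dy p q n (j+1)) := by
  have h1 : (2*j+1) % 2 = 1 := by omega
  have h2 : (2*j+1) / 2 = j := by omega
  simp [dy, h1, h2]

lemma dy_zero (n : ℕ) : dy p q n 0 = p := by
  induction n with
  | zero => simp [dy]
  | succ n ih => simpa using (dy_even p q n 0).trans ih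

lemma dy_top (n : ℕ) : dy p q n (2^n) = q := by
  induction n with
  | zero => simp [dy]
  | succ n ih =>
    have : 2^(n+1) = 2 * 2^n := by ring
    rw [this, dy_even]; exact ih

lemma dy_consec (n : ℕ) : ∀ k < 2^n,
    dist (dy p q n k) (dy p q n (k+1)) = dist p q / 2^n := by
  induction n with
  | zero =>
    intro k hk
    interval_cases k
    simp [dy]
  | succ n ih =>
    intro k hk
    rcases Nat.even_or_odd k with ⟨j, hj⟩ | ⟨j, hj⟩
    · have hj' : k = 2*j := by omega
      have hjlt : j < 2^n := by rw [pow_succ] at hk; omega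
      subst hj'
      rw [dy_odd, dy_even, (cmid_spec _ _).1, ih j hjlt]
      ring
    · have hjlt : j + 1 ≤ 2^n := by rw [pow_succ] at hk; omega
      have hjlt' : j < 2^n := by omega
      subst hj
      have h2 : 2*j+1+1 = 2*(j+1) := by ring
      rw [h2, dy_odd, dy_even, dist_comm, (cmid_spec _ _).2, ih j hjlt']
      ring

lemma dy_upper (n : ℕ) : ∀ k l : ℕ, k ≤ l → l ≤ 2^n →
    dist (dy p q n k) (dy p q n l) ≤ ((l : ℝ) - k) * (dist p q / 2^n) := by
  intro k l hkl hl
  induction l, hkl using Nat.le_induction with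
  | base => simp
  | succ l hkl ih =>
    have hl' : l < 2^n := by omega
    calc dist (dy p q n k) (dy p q n (l+1))
        ≤ dist (dy p q n k) (dy p q n l) + dist (dy p q n l) (dy p q n (l+1)) :=
          dist_triangle _ _ _
      _ ≤ ((l : ℝ) - k) * (dist p q / 2^n) + dist p q / 2^n := by
          have := dy_consec p q n l hl'
          have := ih (by omega)
          linarith
      _ = (((l+1 : ℕ) : ℝ) - k) * (dist p q / 2^n) := by push_cast; ring

lemma dy_dist (n : ℕ) (k l : ℕ) (hkl : k ≤ l) (hl : l ≤ 2^n) :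
    dist (dy p q n k) (dy p q n l) = ((l : ℝ) - k) * (dist p q / 2^n) := by
  refine le_antisymm (dy_upper p q n k l hkl hl) ?_
  have h1 : dist (dy p q n 0) (dy p q n k) ≤ ((k : ℝ) - 0) * (dist p q / 2^n) := by
    simpa using dy_upper p q n 0 k (by omega) (by omega)
  have h2 : dist (dy p q n l) (dy p q n (2^n)) ≤ (((2^n : ℕ) : ℝ) - l) * (dist p q / 2^n) :=
    dy_upper p q n l (2^n) hl le_rfl
  have h3 : dist (dy p q n 0) (dy p q n (2^n)) = dist p q := by
    rw [dy_zero, dy_top]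
  have h4 := dist_triangle4 (dy p q n 0) (dy p q n k) (dy p q n l) (dy p q n (2^n))
  have hpow : ((2^n : ℕ) : ℝ) = (2:ℝ)^n := by push_cast; ring
  have hpos : (0:ℝ) < 2^n := by positivity
  rw [h3] at h4
  rw [hpow] at h2
  have : dist p q = (2:ℝ)^n * (dist p q / 2^n) := by field_simp
  nlinarith [h4, h1, h2]

lemma dy_dist' (n : ℕ) (k l : ℕ) (hk : k ≤ 2^n) (hl : l ≤ 2^n) :
    dist (dy p q n k) (dy p q n l) = |(k : ℝ) - l| * (dist p q / 2^n) := by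
  rcases le_total k l with h | h
  · rw [dy_dist p q n k l h hl, abs_sub_comm, abs_of_nonneg (by
      have : (k:ℝ) ≤ l := by exact_mod_cast h
      linarith)]
  · rw [dist_comm, dy_dist p q n l k h hk, abs_of_nonneg (by
      have : (l:ℝ) ≤ k := by exact_mod_cast h
      linarith)]

lemma dy_shift (n m : ℕ) (k : ℕ) : dy p q (n+m) (k * 2^m) = dy p q n k := by
  induction m with
  | zero => simp
  | succ m ih =>
    have h : k * 2^(m+1) = 2 * (k * 2^m) := by ring
    rw [h, ← Nat.add_assoc, dy_even, ih]

/-- cross-level distances -/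
lemma dy_dist_cross (n N : ℕ) (hnN : n ≤ N) (k l : ℕ) (hk : k ≤ 2^n) (hl : l ≤ 2^N) :
    dist (dy p q n k) (dy p q N l) = |(k : ℝ)/2^n - (l : ℝ)/2^N| * dist p q := by
  obtain ⟨m, rfl⟩ := Nat.exists_eq_add_of_le hnN
  rw [← dy_shift p q n m k]
  have hk' : k * 2^m ≤ 2^(n+m) := by rw [pow_add]; exact Nat.mul_le_mul_right _ hk
  rw [dy_dist' p q (n+m) _ _ hk' hl]
  have h2n : ((2:ℝ))^n ≠ 0 := by positivity
  have h2m : ((2:ℝ))^m ≠ 0 := by positivity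
  have h2nm : ((2:ℝ))^(n+m) ≠ 0 := by positivity
  have : ((k * 2^m : ℕ) : ℝ) = (k:ℝ) * 2^m := by push_cast; ring
  rw [this]
  rw [show (k:ℝ) * 2^m - l = ((k:ℝ)/2^n - (l:ℝ)/2^(n+m)) * 2^(n+m) by
    field_simp; ring]
  rw [abs_mul, abs_of_nonneg (by positivity : (0:ℝ) ≤ (2:ℝ)^(n+m))]
  field_simp

end Dyadic

open Filter Topology in
lemma exists_geodesic {X : Type*} [MetricSpace X] [CompleteSpace X] [CAT0Space X] (p q : X) :
    ∃ γ : ℝ → X, IsGeodesicSegmentBetween γ p q := by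
  by_cases hd : dist p q = 0
  · refine ⟨fun _ => p, rfl, ?_, ?_⟩
    · rw [hd, ← dist_eq_zero.mp hd]
    · intro s hs t ht
      rw [hd] at hs ht
      have hs0 : s = 0 := le_antisymm hs.2 hs.1
      have ht0 : t = 0 := le_antisymm ht.2 ht.1
      simp [hs0, ht0]
  · set d := dist p q with hdef
    have hd0 : 0 < d := lt_of_le_of_ne dist_nonneg (Ne.symm hd)
    set st : ℝ → ℝ := fun t => max 0 (min t d) with hst
    have hst0 : ∀ t, 0 ≤ st t := fun t => le_max_left _ _
    have hstd : ∀ t, st t ≤ d := fun t => max_le hd0.le (min_le_right _ _)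
    set K : ℝ → ℕ → ℕ := fun t n => ⌊st t * 2^n / d⌋₊ with hK
    set u : ℝ → ℕ → X := fun t n => dy p q n (K t n) with hu
    set a : ℝ → ℕ → ℝ := fun t n => (K t n : ℝ) / 2^n with ha
    have harg0 : ∀ t n, 0 ≤ st t * 2^n / d := fun t n => by positivity
    have hKle : ∀ t n, K t n ≤ 2^n := by
      intro t n
      have h1 : st t * 2^n / d ≤ 2^n := by
        rw [div_le_iff₀ hd0]
        have : st t * 2^n ≤ d * 2^n :=
          mul_le_mul_of_nonneg_right (hstd t) (by positivity)
        linarith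
      calc K t n ≤ ⌊((2^n : ℕ) : ℝ)⌋₊ := Nat.floor_mono (by push_cast; exact h1)
        _ = 2^n := Nat.floor_natCast _
    have happrox : ∀ t n, |a t n - st t / d| ≤ 1 / 2^n := by
      intro t n
      have h2n : (0:ℝ) < 2^n := by positivity
      have h1' : (K t n : ℝ) * d ≤ st t * 2^n :=
        (le_div_iff₀ hd0).mp (Nat.floor_le (harg0 t n))
      have h2' : st t * 2^n < ((K t n : ℝ) + 1) * d := by
        have := Nat.lt_floor_add_one (st t * 2^n / d)
        exact (div_lt_iff₀ hd0).mp this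
      rw [abs_le]
      constructor
      · have hB : st t / d ≤ ((K t n : ℝ) + 1) / 2^n := by
          rw [div_le_div_iff₀ hd0 h2n]; nlinarith
        have : ((K t n : ℝ) + 1) / 2^n = a t n + 1/2^n := by rw [ha]; ring
        rw [this] at hB
        linarith
      · have hA : a t n ≤ st t / d := by
          rw [ha, div_le_div_iff₀ h2n hd0]; nlinarith
        have : (0:ℝ) < 1/2^n := by positivity
        linarith
    have hdcross : ∀ s t : ℝ, ∀ n N : ℕ, n ≤ N →
        dist (u s n) (u t N) = |a s n - a t N| * d := by
      intro s t n N hnN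
      exact dy_dist_cross p q n N hnN _ _ (hKle s n) (hKle t N)
    have hcauchy : ∀ t, CauchySeq (u t) := by
      intro t
      apply cauchySeq_of_le_geometric_two (C := 4*d)
      intro n
      rw [hdcross t t n (n+1) (by omega)]
      have h1 := happrox t n
      have h2 := happrox t (n+1)
      have habs : |a t n - a t (n+1)| ≤ 1/2^n + 1/2^(n+1) := by
        calc |a t n - a t (n+1)|
            = |(a t n - st t / d) - (a t (n+1) - st t / d)| := by ring_nf
          _ ≤ |a t n - st t / d| + |a t (n+1) - st t / d| := abs_sub _ _
          _ ≤ 1/2^n + 1/2^(n+1) := by linarith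
      have h2n : (0:ℝ) < 2^n := by positivity
      calc |a t n - a t (n+1)| * d ≤ (1/2^n + 1/2^(n+1)) * d :=
            mul_le_mul_of_nonneg_right habs hd0.le
        _ = (3/2*d) / 2^n := by rw [pow_succ]; field_simp; ring
        _ ≤ (4*d/2) / 2^n := (div_le_div_iff_of_pos_right h2n).mpr (by nlinarith)
        _ = 4*d / 2 / 2^n := by ring
    have hlim : ∀ t, ∃ x, Tendsto (u t) atTop (𝓝 x) :=
      fun t => cauchySeq_tendsto_of_complete (hcauchy t)
    have h2pow : Tendsto (fun n : ℕ => (1:ℝ)/2^n) atTop (𝓝 0) := by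
      simp only [one_div, ← inv_pow]
      exact tendsto_pow_atTop_nhds_zero_of_lt_one (by norm_num) (by norm_num)
    have hconv : ∀ r, Tendsto (fun n => a r n) atTop (𝓝 (st r / d)) := by
      intro r
      rw [← tendsto_sub_nhds_zero_iff]
      exact squeeze_zero_norm (fun n => happrox r n) h2pow
    refine ⟨fun t => (hlim t).choose, ?_, ?_, ?_⟩
    · have h0 : ∀ n, u 0 n = p := by
        intro n
        have hs0 : st 0 = 0 := by simp [hst, hd0.le]
        simp [hu, hK, hs0, dy_zero]
      have : Tendsto (u 0) atTop (𝓝 p) := by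
        simp only [funext h0]; exact tendsto_const_nhds
      exact tendsto_nhds_unique (hlim 0).choose_spec this
    · have h0 : ∀ n, u d n = q := by
        intro n
        have h1 : st d = d := by simp [hst, hd0.le]
        have h2 : st d * 2^n / d = ((2^n : ℕ) : ℝ) := by
          rw [h1]; push_cast; field_simp
        have h3 : K d n = 2^n := by rw [hK]; simp only [h2, Nat.floor_natCast]
        simp [hu, h3, dy_top]
      have : Tendsto (u d) atTop (𝓝 q) := by
        simp only [funext h0]; exact tendsto_const_nhds
      exact tendsto_nhds_unique (hlim d).choose_spec this
    · intro s hs t ht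
      have hstid : ∀ r, r ∈ Set.Icc 0 d → st r = r := by
        intro r hr
        simp [hst, min_eq_left hr.2, max_eq_right hr.1]
      have h1 : Tendsto (fun n => dist (u s n) (u t n)) atTop
          (𝓝 (dist (hlim s).choose (hlim t).choose)) :=
        (hlim s).choose_spec.dist (hlim t).choose_spec
      have h2 : (fun n => dist (u s n) (u t n)) = fun n => |a s n - a t n| * d :=
        funext fun n => hdcross s t n n le_rfl
      have h3 : Tendsto (fun n => |a s n - a t n| * d) atTop (𝓝 (|s/d - t/d| * d)) := by
        have := (((hconv s).sub (hconv t)).abs).mul_const d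
        rwa [hstid s hs, hstid t ht] at this
      have h4 : |s/d - t/d| * d = |s - t| := by
        rw [div_sub_div_same, abs_div, abs_of_pos hd0]
        field_simp
      rw [h2] at h1
      rw [← h4]
      exact tendsto_nhds_unique h1 h3

/-- Let `X` be a complete CAT(0) space, `Y ⊆ X` a nonempty closed convex subset of
coradius `D < ∞`, and `F ⊆ X` a flat on which the distance to `Y` is constantly `D`.
Then the image of `F` under the nearest-point projection `π` onto `Y` is convex. -/
theorem proj_image_of_flat_convex {X : Type*} [MetricSpace X] [CompleteSpace X] [CAT0Space X]
    (Y : Set X) (hYne : Y.Nonempty) (hYcl : IsClosed Y) (hYconv : SetConvex Y)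
    (D : ℝ) (hD : ∀ x : X, Metric.infDist x Y ≤ D)
    (π : X → X) (hπmem : ∀ x, π x ∈ Y)
    (hπnear : ∀ x, ∀ y ∈ Y, dist x (π x) ≤ dist x y)
    (n : ℕ) (F : Set X) (hF : IsFlat n F)
    (hconst : ∀ x ∈ F, Metric.infDist x Y = D) :
    SetConvex (π '' F) := by
  
  rintro _ ⟨x, hxF, rfl⟩ _ ⟨x', hx'F, rfl⟩ γ hγ t ht
  obtain ⟨φ, hφ, hrange⟩ := hF
  -- the distance from a point of `F` to its projection is exactly `D`
  have hdistD : ∀ z ∈ F, dist z (π z) = D := by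
    intro z hz
    refine le_antisymm ?_ ?_
    · rw [← hconst z hz]
      by_contra h
      push_neg at h
      obtain ⟨y, hy, hlt⟩ := (Metric.infDist_lt_iff hYne).mp h
      exact absurd (hπnear z y hy) (not_le.mpr hlt)
    · rw [← hconst z hz]
      exact Metric.infDist_le_dist_of_mem (hπmem z)
  set L := dist (π x) (π x') with hL
  by_cases hL0 : L = 0
  · have ht0 : t = 0 := le_antisymm (hL0 ▸ ht.2) ht.1
    rw [ht0, hγ.1]
    exact ⟨x, hxF, rfl⟩
  · have hLpos : 0 < L := lt_of_le_of_ne dist_nonneg (Ne.symm hL0)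
    obtain ⟨u, hu⟩ : ∃ u, φ u = x := by
      have : x ∈ Set.range φ := hrange ▸ hxF
      exact this
    obtain ⟨v, hv⟩ : ∃ v, φ v = x' := by
      have : x' ∈ Set.range φ := hrange ▸ hx'F
      exact this
    set ℓ := dist x x' with hℓ
    set c1 : ℝ → X := fun s => φ (AffineMap.lineMap u v s) with hc1
    set c2 : ℝ → X := fun s => γ (s * L) with hc2
    have hc1F : ∀ s, c1 s ∈ F := fun s => hrange ▸ Set.mem_range_self _
    have hc1dist : ∀ s s' : ℝ, dist (c1 s) (c1 s') = |s - s'| * ℓ := by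
      intro s s'
      rw [hc1]
      simp only []
      rw [hφ.dist_eq, dist_lineMap_lineMap, Real.dist_eq]
      rw [hℓ, ← hu, ← hv, hφ.dist_eq]
    have hmemL : ∀ s : ℝ, s ∈ Set.Icc (0:ℝ) 1 → s * L ∈ Set.Icc 0 (dist (π x) (π x')) := by
      intro s hs
      rw [← hL]
      exact ⟨mul_nonneg hs.1 hLpos.le, by nlinarith [hs.2, hLpos.le]⟩
    have hc2dist : ∀ s ∈ Set.Icc (0:ℝ) 1, ∀ s' ∈ Set.Icc (0:ℝ) 1,
        dist (c2 s) (c2 s') = |s - s'| * L := by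
      intro s hs s' hs'
      rw [hc2]
      simp only []
      rw [hγ.2.2 (s*L) (hmemL s hs) (s'*L) (hmemL s' hs')]
      rw [show s*L - s'*L = (s-s')*L by ring, abs_mul, abs_of_pos hLpos]
    have hc1mid : ∀ s s' : ℝ, IsMidpoint (c1 ((s+s')/2)) (c1 s) (c1 s') := by
      intro s s'
      constructor
      · rw [hc1dist, hc1dist, show s - (s+s')/2 = (s-s')/2 by ring, abs_div, abs_two]
        ring
      · rw [hc1dist, hc1dist, show s' - (s+s')/2 = -((s-s')/2) by ring, abs_neg,
          abs_div, abs_two, abs_sub_comm s s']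
        ring
    have hmid01 : ∀ s ∈ Set.Icc (0:ℝ) 1, ∀ s' ∈ Set.Icc (0:ℝ) 1,
        (s+s')/2 ∈ Set.Icc (0:ℝ) 1 := by
      intro s hs s' hs'
      exact ⟨by linarith [hs.1, hs'.1], by linarith [hs.2, hs'.2]⟩
    have hc2mid : ∀ s ∈ Set.Icc (0:ℝ) 1, ∀ s' ∈ Set.Icc (0:ℝ) 1,
        IsMidpoint (c2 ((s+s')/2)) (c2 s) (c2 s') := by
      intro s hs s' hs'
      have hm := hmid01 s hs s' hs'
      constructor
      · rw [hc2dist s hs _ hm, hc2dist s hs s' hs',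
          show s - (s+s')/2 = (s-s')/2 by ring, abs_div, abs_two]
        ring
      · rw [hc2dist s' hs' _ hm, hc2dist s hs s' hs',
          show s' - (s+s')/2 = -((s-s')/2) by ring, abs_neg, abs_div, abs_two,
          abs_sub_comm s s']
        ring
    set f : ℝ → ℝ := fun s => dist (c1 s) (c2 s) with hf
    have hf0 : f 0 = D := by
      have e1 : c1 0 = x := by rw [hc1]; simp [hu]
      have e2 : c2 0 = π x := by rw [hc2]; simp [hγ.1]
      rw [hf]; simp only []; rw [e1, e2]
      exact hdistD x hxF
    have hf1 : f 1 = D := by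
      have e1 : c1 1 = x' := by rw [hc1]; simp [hv]
      have e2 : c2 1 = π x' := by rw [hc2]; simp only [one_mul, hL]; exact hγ.2.1
      rw [hf]; simp only []; rw [e1, e2]
      exact hdistD x' hx'F
    have hfmid : ∀ s ∈ Set.Icc (0:ℝ) 1, ∀ s' ∈ Set.Icc (0:ℝ) 1,
        f ((s+s')/2) ≤ (f s + f s')/2 := by
      intro s hs s' hs'
      exact mid_dist_pair (hc1mid s s') (hc2mid s hs s' hs')
    have hdy : ∀ N : ℕ, ∀ k : ℕ, k ≤ 2^N → f ((k:ℝ)/2^N) ≤ D := by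
      intro N
      induction N with
      | zero =>
        intro k hk
        interval_cases k
        · simpa using hf0.le
        · simpa using hf1.le
      | succ N ih =>
        intro k hk
        rcases Nat.even_or_odd k with ⟨j, hj⟩ | ⟨j, hj⟩
        · have hj' : k = 2*j := by omega
          subst hj'
          have e : ((2*j : ℕ):ℝ)/2^(N+1) = (j:ℝ)/2^N := by
            push_cast; rw [pow_succ]; field_simp
          rw [e]
          exact ih j (by rw [pow_succ] at hk; omega)
        · subst hj
          have hjle : j + 1 ≤ 2^N := by rw [pow_succ] at hk; omega
          have hmem : ∀ i : ℕ, i ≤ 2^N → (i:ℝ)/2^N ∈ Set.Icc (0:ℝ) 1 := by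
            intro i hi
            constructor
            · positivity
            · rw [div_le_one (by positivity)]
              exact_mod_cast Nat.cast_le.mpr hi |>.trans_eq (by push_cast; ring)
          have e : ((2*j+1 : ℕ):ℝ)/2^(N+1) = ((j:ℝ)/2^N + ((j+1 : ℕ):ℝ)/2^N)/2 := by
            push_cast; rw [pow_succ]; field_simp; ring
          rw [e]
          have h1 := ih j (by omega)
          have h2 := ih (j+1) hjle
          calc f (((j:ℝ)/2^N + ((j+1 : ℕ):ℝ)/2^N)/2)
              ≤ (f ((j:ℝ)/2^N) + f (((j+1 : ℕ):ℝ)/2^N))/2 :=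
                hfmid _ (hmem j (by omega)) _ (hmem (j+1) hjle)
            _ ≤ D := by linarith
    have hbound : ∀ s ∈ Set.Icc (0:ℝ) 1, f s ≤ D := by
      intro s hs
      refine le_of_forall_pos_le_add ?_
      intro ε hε
      obtain ⟨N, hN⟩ : ∃ N : ℕ, (ℓ + L + 1)/ε < 2^N := pow_unbounded_of_one_lt _ one_lt_two
      have h2N : (0:ℝ) < 2^N := by positivity
      have hℓ0 : 0 ≤ ℓ := dist_nonneg
      have hsmall : (ℓ + L)/2^N < ε := by
        rw [div_lt_iff₀ hε] at hN
        rw [div_lt_iff₀ h2N]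
        nlinarith
      set k := ⌊s * 2^N⌋₊ with hk
      have hks : 0 ≤ s * 2^N := mul_nonneg hs.1 h2N.le
      have hk2 : k ≤ 2^N := by
        calc k ≤ ⌊((2^N : ℕ):ℝ)⌋₊ := Nat.floor_mono (by
            push_cast
            nlinarith [hs.2])
          _ = 2^N := Nat.floor_natCast _
      have hfl : (k:ℝ) ≤ s * 2^N := Nat.floor_le hks
      have hfl2 : s * 2^N < (k:ℝ) + 1 := Nat.lt_floor_add_one _
      have hA : (k:ℝ)/2^N ≤ s := by rw [div_le_iff₀ h2N]; exact hfl
      have hB : s < ((k:ℝ)+1)/2^N := by rw [lt_div_iff₀ h2N]; exact hfl2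
      have hsplit : ((k:ℝ)+1)/2^N = (k:ℝ)/2^N + 1/2^N := by ring
      have habs : |s - (k:ℝ)/2^N| ≤ 1/2^N := by
        rw [abs_le]; constructor <;> [linarith; linarith]
      have hkmem : (k:ℝ)/2^N ∈ Set.Icc (0:ℝ) 1 := by
        constructor
        · positivity
        · rw [div_le_one h2N]
          calc (k:ℝ) ≤ s * 2^N := hfl
            _ ≤ 2^N := by nlinarith [hs.2]
      calc f s ≤ dist (c1 s) (c1 ((k:ℝ)/2^N)) + dist (c1 ((k:ℝ)/2^N)) (c2 ((k:ℝ)/2^N))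
            + dist (c2 ((k:ℝ)/2^N)) (c2 s) := dist_triangle4 _ _ _ _
        _ ≤ |s - (k:ℝ)/2^N| * ℓ + D + |(k:ℝ)/2^N - s| * L := by
            rw [hc1dist, hc2dist _ hkmem _ hs]
            have := hdy N k hk2
            gcongr
        _ ≤ 1/2^N * ℓ + D + 1/2^N * L := by
            have habs' : |(k:ℝ)/2^N - s| ≤ 1/2^N := by rwa [abs_sub_comm]
            have hL0' : 0 ≤ L := hLpos.le
            have h1N : (0:ℝ) ≤ 1/2^N := by positivity
            have e1 : |s - (k:ℝ)/2^N| * ℓ ≤ 1/2^N * ℓ :=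
              mul_le_mul_of_nonneg_right habs hℓ0
            have e2 : |(k:ℝ)/2^N - s| * L ≤ 1/2^N * L :=
              mul_le_mul_of_nonneg_right habs' hL0'
            linarith
        _ = D + (ℓ + L)/2^N := by ring
        _ ≤ D + ε := by linarith
    -- the point on the flat above `γ t`
    set s := t / L with hs0
    have hsmem : s ∈ Set.Icc (0:ℝ) 1 := by
      constructor
      · exact div_nonneg ht.1 hLpos.le
      · rw [div_le_one hLpos]
        exact ht.2
    have hst : s * L = t := div_mul_cancel₀ _ hL0
    set m := c1 s with hm
    have hmF : m ∈ F := hc1F s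
    have hqY : γ t ∈ Y := hYconv (π x) (hπmem x) (π x') (hπmem x') γ hγ t ht
    have hinf : Metric.infDist m Y = D := hconst m hmF
    have hmq : dist m (γ t) ≤ D := by
      have := hbound s hsmem
      rw [hf] at this
      simp only [] at this
      rw [hc2] at this
      simp only [] at this
      rwa [hst] at this
    have hDle : D ≤ dist m (γ t) := hinf ▸ Metric.infDist_le_dist_of_mem hqY
    have hmq' : dist m (γ t) = D := le_antisymm hmq hDle
    have hmp : dist m (π m) = D := hdistD m hmF
    have hD0 : 0 ≤ D := hmp ▸ dist_nonneg
    have hproj : π m = γ t := by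
      by_contra hne
      obtain ⟨σ, hσ⟩ := exists_geodesic (π m) (γ t)
      set e := dist (π m) (γ t) with he0
      have he : 0 < e := dist_pos.mpr hne
      have hhalf : e/2 ∈ Set.Icc 0 (dist (π m) (γ t)) := ⟨by positivity, half_le_self he.le⟩
      have hw : σ (e/2) ∈ Y := hYconv (π m) (hπmem m) (γ t) hqY σ hσ (e/2) hhalf
      have hwm : IsMidpoint (σ (e/2)) (π m) (γ t) := by
        have hA : dist (π m) (σ (e/2)) = e/2 := by
          conv_lhs => rw [← hσ.1]
          rw [hσ.2.2 0 ⟨le_rfl, dist_nonneg⟩ (e/2) hhalf]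
          rw [show (0:ℝ) - e/2 = -(e/2) by ring, abs_neg, abs_of_nonneg (by positivity)]
        have hB : dist (γ t) (σ (e/2)) = e/2 := by
          conv_lhs => rw [← hσ.2.1]
          rw [hσ.2.2 (dist (π m) (γ t)) ⟨dist_nonneg, le_rfl⟩ (e/2) hhalf]
          rw [← he0, show e - e/2 = e/2 by ring, abs_of_nonneg (by positivity)]
        exact ⟨by rw [hA, he0], by rw [hB, he0]⟩
      have hcn := CAT0Space.cn_ineq m (π m) (γ t) _ hwm
      have hge : D ≤ dist m (σ (e/2)) := hinf ▸ Metric.infDist_le_dist_of_mem hw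
      rw [hmp, hmq', ← he0] at hcn
      nlinarith [pow_le_pow_left₀ hD0 hge 2]
    exact ⟨m, hmF, hproj⟩
end

section
/- Let N be a closed normal subgroup of a locally compact Hausdorff group H. Then the image of the identity component H° in H/N is dense in the identity component (H/N)°. -/
open Set Filter Topology
open scoped Pointwise

namespace ImageIdentityComponentAux

variable {G : Type*} [Group G] [TopologicalSpace G] [IsTopologicalGroup G]

/-- The identity component is a normal subgroup. -/
lemma normal_connectedComponentOfOne : (Subgroup.connectedComponentOfOne G).Normal := by
  constructor
  intro n hn g
  show g * n * g⁻¹ ∈ connectedComponent (1 : G)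
  have h := (IsTopologicalGroup.continuous_conj g).image_connectedComponent_subset (1 : G)
  have := h ⟨n, hn, rfl⟩
  simpa using this

lemma mem_connectedComponent_iff_inv_mul {x y : G} :
    y ∈ connectedComponent x ↔ x⁻¹ * y ∈ connectedComponent (1 : G) := by
  constructor
  · intro h
    have h2 := (continuous_mul_left x⁻¹).image_connectedComponent_subset x
    have := h2 ⟨y, h, rfl⟩
    simpa using this
  · intro h
    have h2 := (continuous_mul_left x).image_connectedComponent_subset (1 : G)
    have := h2 ⟨x⁻¹ * y, h, rfl⟩
    simpa using this

lemma td_of_injective_continuous {X Y : Type*} [TopologicalSpace X] [TopologicalSpace Y]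
    [TotallyDisconnectedSpace Y] {f : X → Y} (hc : Continuous f) (hi : Function.Injective f) :
    TotallyDisconnectedSpace X := by
  constructor
  intro t _ ht x hx y hy
  have hsub : (f '' t).Subsingleton := (ht.image f hc.continuousOn).subsingleton
  exact hi (hsub (mem_image_of_mem f hx) (mem_image_of_mem f hy))

/-- Variant of `IsTopologicalGroup.exist_mul_closure_nhd` for a compact open set in a
(not necessarily compact) group. -/
lemma exist_mul_closure_nhd' {W : Set G} (Wcpt : IsCompact W) (Wopen : IsOpen W) :
    ∃ T ∈ 𝓝 (1 : G), W * T ⊆ W := by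
  apply Wcpt.induction_on (p := fun S ↦ ∃ T ∈ 𝓝 (1 : G), S * T ⊆ W)
    ⟨Set.univ, by simp only [univ_mem, empty_mul, empty_subset, and_self]⟩
    (fun _ _ huv ⟨T, hT, mem⟩ ↦ ⟨T, hT, (mul_subset_mul_right huv).trans mem⟩)
    fun U V ⟨T₁, hT₁, mem1⟩ ⟨T₂, hT₂, mem2⟩ ↦ ⟨T₁ ∩ T₂, inter_mem hT₁ hT₂, by
      rw [union_mul]
      exact union_subset (mul_subset_mul_left inter_subset_left |>.trans mem1)
        (mul_subset_mul_left inter_subset_right |>.trans mem2)⟩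
  intro x memW
  have : (x, 1) ∈ (fun p : G × G ↦ p.1 * p.2) ⁻¹' W := by simp [memW]
  rcases isOpen_prod_iff.mp (continuous_mul.isOpen_preimage W Wopen) x 1 this with
    ⟨U, V, Uopen, Vopen, xmemU, onememV, prodsub⟩
  have h6 : U * V ⊆ W := mul_subset_iff.mpr (fun _ hx _ hy ↦ prodsub (mk_mem_prod hx hy))
  exact ⟨U ∩ W, ⟨U, Uopen.mem_nhds xmemU, W, fun _ a ↦ a, rfl⟩,
    V, IsOpen.mem_nhds Vopen onememV, fun _ a ↦ h6 ((mul_subset_mul_right inter_subset_left) a)⟩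

lemma exists_mulInvClosureNhd' {W : Set G} (Wcpt : IsCompact W) (Wopen : IsOpen W) :
    ∃ T, IsTopologicalGroup.mulInvClosureNhd T W := by
  rcases exist_mul_closure_nhd' Wcpt Wopen with ⟨S, Smemnhds, mulclose⟩
  rcases mem_nhds_iff.mp Smemnhds with ⟨U, UsubS, Uopen, onememU⟩
  refine ⟨U ∩ U⁻¹, ?_, ?_, ?_, ?_⟩
  · simp [Uopen.mem_nhds onememU, inv_mem_nhds_one]
  · simp [inter_comm]
  · exact Uopen.inter Uopen.inv
  · exact fun a ha ↦ mulclose (mul_subset_mul_left UsubS (mul_subset_mul_left inter_subset_left ha))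

/-- Van Dantzig-type lemma: a compact clopen neighbourhood of `1` contains an open subgroup. -/
lemma exist_openSubgroup_subset_compact_clopen {W : Set G} (Wcpt : IsCompact W)
    (WClopen : IsClopen W) (einW : 1 ∈ W) :
    ∃ S : Subgroup G, IsOpen (S : Set G) ∧ (S : Set G) ⊆ W := by
  rcases exists_mulInvClosureNhd' Wcpt WClopen.2 with ⟨V, hV⟩
  let S : Subgroup G := {
    carrier := ⋃ n, V ^ (n + 1)
    mul_mem' := fun ha hb ↦ by
      rcases mem_iUnion.mp ha with ⟨k, hk⟩
      rcases mem_iUnion.mp hb with ⟨l, hl⟩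
      apply mem_iUnion.mpr
      use k + 1 + l
      rw [add_assoc, pow_add]
      exact Set.mul_mem_mul hk hl
    one_mem' := by
      apply mem_iUnion.mpr
      use 0
      simp [mem_of_mem_nhds hV.nhds]
    inv_mem' := fun ha ↦ by
      rcases mem_iUnion.mp ha with ⟨k, hk⟩
      apply mem_iUnion.mpr
      use k
      rw [← hV.inv]
      simpa only [inv_pow, Set.mem_inv, inv_inv] using hk }
  have Sopen : IsOpen (⋃ n, V ^ (n + 1)) := by
    refine isOpen_iUnion (fun n ↦ ?_)
    rw [pow_succ]
    exact hV.isOpen.mul_left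
  refine ⟨S, Sopen, ?_⟩
  have mulVpow (n : ℕ) : W * V ^ (n + 1) ⊆ W := by
    induction' n with n ih
    · simp [hV.mul]
    · rw [pow_succ, ← mul_assoc]
      exact (Set.mul_subset_mul_right ih).trans hV.mul
  have (n : ℕ) : V ^ (n + 1) ⊆ W * V ^ (n + 1) := by
    intro x xin
    rw [Set.mem_mul]
    exact ⟨1, einW, x, xin, one_mul x⟩
  exact iUnion_subset fun i _ a ↦ mulVpow i (this i a)

variable (G) in
/-- The quotient of a topological group by (the subgroup generated by) the identity component
is totally disconnected. -/
lemma totallyDisconnected_quotient_connectedComponent :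
    TotallyDisconnectedSpace (G ⧸ Subgroup.connectedComponentOfOne G) := by
  let f : (G ⧸ Subgroup.connectedComponentOfOne G) → ConnectedComponents G := fun q =>
    Quotient.liftOn' q ConnectedComponents.mk (fun a b hab => by
      rw [QuotientGroup.leftRel_apply] at hab
      have hb : b ∈ connectedComponent a := mem_connectedComponent_iff_inv_mul.mpr hab
      exact ConnectedComponents.coe_eq_coe.mpr (connectedComponent_eq hb))
  have hc : Continuous f :=
    (QuotientGroup.isQuotientMap_mk _).continuous_iff.mpr ConnectedComponents.continuous_coe
  have hi : Function.Injective f := by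
    intro a b
    refine Quotient.inductionOn₂' a b fun x y h => ?_
    have hxy : x ∈ connectedComponent y := ConnectedComponents.coe_eq_coe'.mp h
    have : y⁻¹ * x ∈ connectedComponent (1 : G) := mem_connectedComponent_iff_inv_mul.mp hxy
    have hmem : x⁻¹ * y ∈ Subgroup.connectedComponentOfOne G := by
      have := inv_mem_connectedComponent_one this
      show x⁻¹ * y ∈ connectedComponent (1 : G)
      simpa using this
    exact QuotientGroup.eq.mpr hmem
  exact td_of_injective_continuous hc hi

/-- Key lemma: in a locally compact Hausdorff group, any open neighbourhood of `1` that is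
stable under right multiplication by the identity component contains an open subgroup. -/
lemma exists_openSubgroup_of_isOpen_saturated {H : Type*} [Group H] [TopologicalSpace H]
    [IsTopologicalGroup H] [LocallyCompactSpace H] [T2Space H]
    {V : Set H} (Vopen : IsOpen V) (oneV : (1 : H) ∈ V)
    (hsat : V * connectedComponent (1 : H) ⊆ V) :
    ∃ S : Subgroup H, IsOpen (S : Set H) ∧ (S : Set H) ⊆ V := by
  letI : (Subgroup.connectedComponentOfOne H).Normal := normal_connectedComponentOfOne
  haveI : T3Space (H ⧸ Subgroup.connectedComponentOfOne H) :=
    QuotientGroup.instT3Space (hN := isClosed_connectedComponent)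
  haveI : TotallyDisconnectedSpace (H ⧸ Subgroup.connectedComponentOfOne H) :=
    totallyDisconnected_quotient_connectedComponent H
  set p : H → H ⧸ Subgroup.connectedComponentOfOne H := QuotientGroup.mk with hp
  have pV_open : IsOpen (p '' V) := QuotientGroup.isOpenMap_coe V Vopen
  have onepV : (1 : H ⧸ Subgroup.connectedComponentOfOne H) ∈ p '' V := ⟨1, oneV, rfl⟩
  obtain ⟨K, Kcpt, oneintK, KsubpV⟩ := exists_compact_subset pV_open onepV
  obtain ⟨W, WClopen, oneW, Wsub⟩ :=
    (loc_compact_Haus_tot_disc_of_zero_dim).mem_nhds_iff.mp (isOpen_interior.mem_nhds oneintK)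
  have Wcpt : IsCompact W := Kcpt.of_isClosed_subset WClopen.1 (Wsub.trans interior_subset)
  obtain ⟨S', S'open, S'subW⟩ := exist_openSubgroup_subset_compact_clopen Wcpt WClopen oneW
  refine ⟨S'.comap (QuotientGroup.mk' (Subgroup.connectedComponentOfOne H)), ?_, ?_⟩
  · exact S'open.preimage QuotientGroup.continuous_mk
  · intro x hx
    have hx' : p x ∈ p '' V :=
      KsubpV (interior_subset (Wsub (S'subW hx)))
    have : x ∈ p ⁻¹' (p '' V) := hx'
    rw [hp, QuotientGroup.preimage_image_mk] at this
    rcases mem_iUnion.mp this with ⟨c, hc⟩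
    have hxc : x * (c : H) ∈ V := hc
    have : x = (x * (c : H)) * (c : H)⁻¹ := by group
    rw [this]
    exact hsat (Set.mul_mem_mul hxc (inv_mem_connectedComponent_one c.2))

end ImageIdentityComponentAux

open ImageIdentityComponentAux

/-- Let `N` be a closed normal subgroup of a locally compact Hausdorff group `H`.  Then the
image of the identity component `H°` in `H/N` is dense in the identity component `(H/N)°`;
equivalently, its closure is exactly `(H/N)°`. -/
theorem image_identityComponent_dense
    {H : Type*} [Group H] [TopologicalSpace H] [IsTopologicalGroup H]
    [LocallyCompactSpace H] [T2Space H]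
    (N : Subgroup H) [N.Normal] (hNcl : IsClosed (N : Set H)) :
    closure (QuotientGroup.mk '' (connectedComponent (1 : H)) : Set (H ⧸ N)) =
      connectedComponent (1 : H ⧸ N) := by
  letI : (Subgroup.connectedComponentOfOne H).Normal := normal_connectedComponentOfOne
  apply subset_antisymm
  · apply closure_minimal _ isClosed_connectedComponent
    have h := (QuotientGroup.continuous_mk (N := N)).image_connectedComponent_subset (1 : H)
    simpa using h
  · -- The closure of the image is (the carrier of) a closed normal subgroup `K`.
    haveI hmapnormal : ((Subgroup.connectedComponentOfOne H).map (QuotientGroup.mk' N)).Normal :=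
      Subgroup.Normal.map inferInstance _ (QuotientGroup.mk'_surjective N)
    set K : Subgroup (H ⧸ N) :=
      ((Subgroup.connectedComponentOfOne H).map (QuotientGroup.mk' N)).topologicalClosure with hK
    haveI : K.Normal := Subgroup.is_normal_topologicalClosure _
    have hK_carrier : (K : Set (H ⧸ N)) =
        closure (QuotientGroup.mk '' (connectedComponent (1 : H))) := by
      rw [hK, Subgroup.topologicalClosure_coe]
      exact congrArg closure (Subgroup.coe_map _ _)
    set M : Subgroup H := K.comap (QuotientGroup.mk' N) with hM
    haveI : M.Normal := Subgroup.Normal.comap inferInstance _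
    have hMclosed : IsClosed (M : Set H) := by
      have : (M : Set H) = QuotientGroup.mk ⁻¹' (K : Set (H ⧸ N)) := rfl
      rw [this]
      exact (Subgroup.isClosed_topologicalClosure _).preimage QuotientGroup.continuous_mk
    have hNM : N ≤ M := by
      intro x hx
      show (QuotientGroup.mk x : H ⧸ N) ∈ K
      have hx1 : (QuotientGroup.mk x : H ⧸ N) = 1 := (QuotientGroup.eq_one_iff x).mpr hx
      rw [hx1]; exact K.one_mem
    have hcompM : connectedComponent (1 : H) ⊆ (M : Set H) := by
      intro c hc
      show (QuotientGroup.mk c : H ⧸ N) ∈ (K : Set (H ⧸ N))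
      rw [hK_carrier]
      exact subset_closure ⟨c, hc, rfl⟩
    haveI : T3Space (H ⧸ M) := QuotientGroup.instT3Space (hN := hMclosed)
    let f : (H ⧸ N) →* (H ⧸ M) :=
      QuotientGroup.map N M (MonoidHom.id H) (by simpa using hNM)
    have fcont : Continuous f :=
      (QuotientGroup.isQuotientMap_mk N).continuous_iff.mpr QuotientGroup.continuous_mk
    -- The identity component of `H ⧸ M` is trivial.
    have hcomp : connectedComponent (1 : H ⧸ M) ⊆ {1} := by
      intro z hz
      rw [Set.mem_singleton_iff]
      by_contra hne
      have hUopen : IsOpen ({z}ᶜ : Set (H ⧸ M)) := isOpen_compl_singleton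
      have hVopen : IsOpen (QuotientGroup.mk ⁻¹' ({z}ᶜ : Set (H ⧸ M))) :=
        hUopen.preimage QuotientGroup.continuous_mk
      have oneV : (1 : H) ∈ QuotientGroup.mk ⁻¹' ({z}ᶜ : Set (H ⧸ M)) := by
        simp only [Set.mem_preimage, Set.mem_compl_iff, Set.mem_singleton_iff]
        intro h
        exact hne (by rw [← h]; rfl)
      have hsat : (QuotientGroup.mk ⁻¹' ({z}ᶜ : Set (H ⧸ M))) * connectedComponent (1 : H) ⊆
          QuotientGroup.mk ⁻¹' ({z}ᶜ : Set (H ⧸ M)) := by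
        rintro _ ⟨v, hv, c, hc, rfl⟩
        have hcM : (QuotientGroup.mk c : H ⧸ M) = 1 :=
          (QuotientGroup.eq_one_iff c).mpr (hcompM hc)
        show (QuotientGroup.mk (v * c) : H ⧸ M) ∈ ({z}ᶜ : Set (H ⧸ M))
        have : (QuotientGroup.mk (v * c) : H ⧸ M) = QuotientGroup.mk v := by
          rw [QuotientGroup.mk_mul, hcM, mul_one]
        rw [this]
        exact hv
      obtain ⟨S, Sopen, SsubV⟩ :=
        exists_openSubgroup_of_isOpen_saturated hVopen oneV hsat
      -- The image of S in H ⧸ M is a clopen subgroup.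
      have hSopen : IsOpen ((S.map (QuotientGroup.mk' M) : Subgroup (H ⧸ M)) : Set (H ⧸ M)) := by
        have : ((S.map (QuotientGroup.mk' M) : Subgroup (H ⧸ M)) : Set (H ⧸ M)) =
            QuotientGroup.mk '' (S : Set H) := Subgroup.coe_map _ _
        rw [this]
        exact QuotientGroup.isOpenMap_coe _ Sopen
      have hSclosed : IsClosed ((S.map (QuotientGroup.mk' M) : Subgroup (H ⧸ M)) : Set (H ⧸ M)) :=
        Subgroup.isClosed_of_isOpen _ hSopen
      have hone : (1 : H ⧸ M) ∈ (S.map (QuotientGroup.mk' M) : Subgroup (H ⧸ M)) :=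
        Subgroup.one_mem _
      have hsubset := IsClopen.connectedComponent_subset ⟨hSclosed, hSopen⟩ hone
      have hzS := hsubset hz
      rcases hzS with ⟨s, hs, hsz⟩
      have : (QuotientGroup.mk s : H ⧸ M) ∈ ({z}ᶜ : Set (H ⧸ M)) := SsubV hs
      exact this (by rw [← hsz]; rfl)
    -- Conclude.
    intro y hy
    have hfy : f y ∈ connectedComponent (1 : H ⧸ M) := by
      have himg := fcont.image_connectedComponent_subset (1 : H ⧸ N)
      have := himg ⟨y, hy, rfl⟩
      rwa [map_one f] at this
    have hfy1 : f y = 1 := hcomp hfy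
    obtain ⟨x, rfl⟩ := QuotientGroup.mk'_surjective N y
    have hxM : x ∈ M := by
      have : (QuotientGroup.mk x : H ⧸ M) = 1 := hfy1
      exact (QuotientGroup.eq_one_iff x).mp this
    have : (QuotientGroup.mk x : H ⧸ N) ∈ (K : Set (H ⧸ N)) := hxM
    rwa [hK_carrier] at this
end

section
/- Let G be a unimodular locally compact group, H ≤ G a closed subgroup, and (gₙ) a sequence in G such that (i) for every h ∈ H the sequence gₙ h gₙ⁻¹ converges to a fixed compact subgroup K (compacting sequence), and (ii) for every g ∈ G the set {gₙ g gₙ⁻¹ : n ∈ ℕ} is relatively compact. Then H is compact. -/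
open Filter MeasureTheory

open scoped Pointwise

/-- Auxiliary: given pointwise bounded conjugation orbits, there is a compact neighbourhood
`C` of `1` and a monotone family of compact sets `Q m` such that the conjugation orbit of
every point of `C` is contained in some `Q m`. -/
lemma exists_compact_nhds_orbit_bound
    {G : Type*} [Group G] [TopologicalSpace G] [IsTopologicalGroup G]
    [LocallyCompactSpace G] [T2Space G]
    (g : ℕ → G)
    (hbounded : ∀ x : G, IsCompact (closure (Set.range fun n => g n * x * (g n)⁻¹))) :
    ∃ (C : Set G) (Q : ℕ → Set G), IsCompact C ∧ C ∈ nhds (1 : G) ∧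
      (∀ m, IsCompact (Q m)) ∧
      ∀ x ∈ C, ∃ m, ∀ n, g n * x * (g n)⁻¹ ∈ Q m := by
  classical
  obtain ⟨C, hCc, hCn⟩ := exists_compact_mem_nhds (1 : G)
  set S : ℕ → Set G := fun m =>
    (C ∪ C⁻¹ ∪ {1}) ∪ ⋃ i ∈ Finset.range (m + 1), ({g i, (g i)⁻¹} : Set G) with hSdef
  have hSone : ∀ m, (1 : G) ∈ S m := fun m => Or.inl (Or.inr rfl)
  have hCS : ∀ m, C ⊆ S m := fun m x hx => Or.inl (Or.inl (Or.inl hx))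
  have hgS : ∀ n m, n ≤ m → g n ∈ S m := by
    intro n m hnm
    refine Or.inr ?_
    exact Set.mem_biUnion (Finset.mem_range.2 (Nat.lt_succ_of_le hnm)) (Or.inl rfl)
  have hSmono : Monotone S := by
    intro a b hab x hx
    rcases hx with h | h
    · exact Or.inl h
    · refine Or.inr ?_
      obtain ⟨i, hi, hxi⟩ := Set.mem_iUnion₂.1 h
      exact Set.mem_biUnion (Finset.mem_range.2 (lt_of_lt_of_le (Finset.mem_range.1 hi)
        (by omega))) hxi
  have hSinvmem : ∀ m, ∀ x ∈ S m, x⁻¹ ∈ S m := by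
    intro m x hx
    rcases hx with ((h | h) | h) | h
    · exact Or.inl (Or.inl (Or.inr (Set.inv_mem_inv.2 h)))
    · exact Or.inl (Or.inl (Or.inl (by simpa using h)))
    · exact Or.inl (Or.inr (by simp [Set.mem_singleton_iff.1 h]))
    · obtain ⟨i, hi, hxi⟩ := Set.mem_iUnion₂.1 h
      refine Or.inr (Set.mem_biUnion hi ?_)
      rcases hxi with h' | h'
      · exact Or.inr (by simp [h'])
      · exact Or.inl (by simpa using congrArg (·⁻¹) (Set.mem_singleton_iff.1 h'))
  have hSinv : ∀ m, (S m)⁻¹ ⊆ S m := by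
    intro m x hx
    have : x⁻¹ ∈ S m := hx
    simpa using hSinvmem m _ this
  have hScpt : ∀ m, IsCompact (S m) := by
    intro m
    refine IsCompact.union (IsCompact.union (hCc.union hCc.inv) isCompact_singleton) ?_
    refine Set.Finite.isCompact ?_
    exact Set.Finite.biUnion (Finset.range (m + 1)).finite_toSet
      (fun i _ => (Set.finite_singleton _).insert _)
  set Q : ℕ → Set G := fun m => S m ^ (m + 1) with hQdef
  have hpowcpt : ∀ (s : Set G), IsCompact s → ∀ k, IsCompact (s ^ (k + 1)) := by
    intro s hs k
    induction k with
    | zero => simpa [pow_one] using hs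
    | succ k ih => rw [pow_succ]; exact ih.mul hs
  have hQcpt : ∀ m, IsCompact (Q m) := fun m => hpowcpt _ (hScpt m) m
  have hQmono : Monotone Q := by
    intro a b hab
    exact Set.pow_subset_pow (hSmono hab) (hSone b) (by omega)
  -- the union of the `Q m` is a subgroup
  have hQmul : ∀ a b : ℕ, ∀ x ∈ Q a, ∀ y ∈ Q b, x * y ∈ Q (a + b + 1) := by
    intro a b x hx y hy
    have hx' : x ∈ S (a + b + 1) ^ (a + 1) :=
      Set.pow_subset_pow_left (hSmono (by omega)) hx
    have hy' : y ∈ S (a + b + 1) ^ (b + 1) :=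
      Set.pow_subset_pow_left (hSmono (by omega)) hy
    have := Set.mul_mem_mul hx' hy'
    rwa [← pow_add, show a + 1 + (b + 1) = a + b + 1 + 1 by omega] at this
  have hQinv : ∀ a : ℕ, ∀ x ∈ Q a, x⁻¹ ∈ Q a := by
    intro a x hx
    have h1 : x⁻¹ ∈ (Q a)⁻¹ := Set.inv_mem_inv.2 hx
    have h2 : (Q a)⁻¹ = (S a)⁻¹ ^ (a + 1) := by
      rw [hQdef]; exact (inv_pow (S a) (a + 1)).symm
    rw [h2] at h1
    exact Set.pow_subset_pow_left (hSinv a) h1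
  let G₂ : Subgroup G :=
    { carrier := ⋃ m, Q m
      one_mem' := Set.mem_iUnion.2 ⟨0, Set.one_mem_pow (hSone 0)⟩
      mul_mem' := by
        intro x y hx hy
        obtain ⟨a, ha⟩ := Set.mem_iUnion.1 hx
        obtain ⟨b, hb⟩ := Set.mem_iUnion.1 hy
        exact Set.mem_iUnion.2 ⟨a + b + 1, hQmul a b x ha y hb⟩
      inv_mem' := by
        intro x hx
        obtain ⟨a, ha⟩ := Set.mem_iUnion.1 hx
        exact Set.mem_iUnion.2 ⟨a, hQinv a x ha⟩ }
  have hG₂carrier : (G₂ : Set G) = ⋃ m, Q m := rfl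
  have hCQ0 : C ⊆ Q 0 := by
    intro x hx
    have : x ∈ S 0 := hCS 0 hx
    simpa [hQdef, pow_one] using this
  have hG₂open : IsOpen (G₂ : Set G) := by
    refine Subgroup.isOpen_of_mem_nhds G₂ (g := 1) ?_
    exact Filter.mem_of_superset hCn (hCQ0.trans (Set.subset_iUnion Q 0))
  have hG₂closed : IsClosed (G₂ : Set G) := Subgroup.isClosed_of_isOpen G₂ hG₂open
  have h1int : (1 : G) ∈ interior C := mem_interior_iff_mem_nhds.2 hCn
  -- absorption: every compact subset of `G₂` is contained in some `Q m`
  have habs : ∀ D : Set G, IsCompact D → D ⊆ (G₂ : Set G) → ∃ m, D ⊆ Q m := by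
    intro D hDc hDsub
    have hcover : D ⊆ ⋃ m, Q m * interior C := by
      intro x hx
      obtain ⟨m, hm⟩ := Set.mem_iUnion.1 (hDsub hx)
      exact Set.mem_iUnion.2 ⟨m, by simpa using Set.mul_mem_mul hm h1int⟩
    have hdir : Directed (· ⊆ ·) (fun m => Q m * interior C) := by
      intro a b
      exact ⟨max a b, Set.mul_subset_mul_right (hQmono (le_max_left a b)),
        Set.mul_subset_mul_right (hQmono (le_max_right a b))⟩
    obtain ⟨m, hm⟩ := hDc.elim_directed_cover _
      (fun m => IsOpen.mul_left isOpen_interior) hcover hdir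
    refine ⟨m + 1, fun x hx => ?_⟩
    have hx' : x ∈ Q m * interior C := hm hx
    have : Q m * interior C ⊆ S (m + 1) ^ (m + 1) * S (m + 1) :=
      Set.mul_subset_mul (Set.pow_subset_pow_left (hSmono (Nat.le_succ m)))
        ((interior_subset).trans (hCS (m + 1)))
    have hx'' := this hx'
    rwa [← pow_succ] at hx''
  refine ⟨C, Q, hCc, hCn, hQcpt, ?_⟩
  intro x hx
  have hxG₂ : x ∈ G₂ := Set.mem_iUnion.2 ⟨0, hCQ0 hx⟩
  have hgG₂ : ∀ n, g n ∈ G₂ := by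
    intro n
    have h1 : g n ∈ S n := hgS n n le_rfl
    have h2 : g n ∈ Q n := Set.subset_pow (hSone n) (by omega) h1
    exact Set.mem_iUnion.2 ⟨n, h2⟩
  have hrange : Set.range (fun n => g n * x * (g n)⁻¹) ⊆ (G₂ : Set G) := by
    rintro _ ⟨n, rfl⟩
    exact G₂.mul_mem (G₂.mul_mem (hgG₂ n) hxG₂) (G₂.inv_mem (hgG₂ n))
  have hcl : closure (Set.range fun n => g n * x * (g n)⁻¹) ⊆ (G₂ : Set G) :=
    hG₂closed.closure_subset_iff.2 hrange
  obtain ⟨m, hm⟩ := habs _ (hbounded x) hcl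
  exact ⟨m, fun n => hm (subset_closure ⟨n, rfl⟩)⟩

/-- Let `G` be a unimodular locally compact group (a left Haar measure is also right
invariant), `H ≤ G` a closed subgroup, and `(gₙ)` a sequence in `G` such that
(i) `gₙ h gₙ⁻¹` converges to a fixed compact subgroup `K` uniformly on finite subsets of `H`
(a compacting sequence for `H`), and (ii) for every `g ∈ G` the set
`{gₙ g gₙ⁻¹ : n ∈ ℕ}` is relatively compact.  Then `H` is compact. -/
theorem compact_of_compacting_unimodular
    {G : Type*} [Group G] [TopologicalSpace G] [IsTopologicalGroup G]
    [LocallyCompactSpace G] [T2Space G] [MeasurableSpace G] [BorelSpace G]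
    (μ : Measure G) [μ.IsHaarMeasure] [μ.IsMulRightInvariant]
    (H : Subgroup G) (hHcl : IsClosed (H : Set G))
    (g : ℕ → G) (K : Subgroup G) (hKcpt : IsCompact (K : Set G))
    (hcompacting : ∀ U : Set G, IsOpen U → (K : Set G) ⊆ U → ∀ F : Finset G,
      (F : Set G) ⊆ (H : Set G) → ∀ᶠ n in atTop, ∀ h ∈ F, g n * h * (g n)⁻¹ ∈ U)
    (hbounded : ∀ x : G, IsCompact (closure (Set.range fun n => g n * x * (g n)⁻¹))) :
    IsCompact (H : Set G) := by
  classical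
  by_contra hHc
  have hHnotsub : ∀ E : Set G, IsCompact E → ¬ ((H : Set G) ⊆ E) := by
    intro E hE hsub
    exact hHc (hE.of_isClosed_subset hHcl hsub)
  obtain ⟨C, Q, hCc, hCn, hQcpt, horb⟩ := exists_compact_nhds_orbit_bound g hbounded
  -- replace Q by a monotone family
  set Q' : ℕ → Set G := fun m => ⋃ i ∈ Finset.range (m + 1), Q i with hQ'def
  have hQ'cpt : ∀ m, IsCompact (Q' m) :=
    fun m => (Finset.range (m + 1)).isCompact_biUnion (fun i _ => hQcpt i)
  have hQ'mono : Monotone Q' := by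
    intro a b hab x hx
    obtain ⟨i, hi, hxi⟩ := Set.mem_iUnion₂.1 hx
    exact Set.mem_biUnion (Finset.mem_range.2
      (lt_of_lt_of_le (Finset.mem_range.1 hi) (by omega))) hxi
  have horb' : ∀ x ∈ C, ∃ m, ∀ n, g n * x * (g n)⁻¹ ∈ Q' m := by
    intro x hx
    obtain ⟨m, hm⟩ := horb x hx
    exact ⟨m, fun n => Set.mem_biUnion (Finset.self_mem_range_succ m) (hm n)⟩
  -- the sets T m
  set T : ℕ → Set G := fun m => C ∩ ⋂ n, (fun x => g n * x * (g n)⁻¹) ⁻¹' Q' m with hTdef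
  have hconjcont : ∀ n : ℕ, Continuous (fun x : G => g n * x * (g n)⁻¹) := by
    intro n
    exact (continuous_const.mul continuous_id).mul continuous_const
  have hTclosed : ∀ m, IsClosed (T m) := by
    intro m
    exact hCc.isClosed.inter (isClosed_iInter fun n =>
      (hQ'cpt m).isClosed.preimage (hconjcont n))
  have hTcpt : ∀ m, IsCompact (T m) :=
    fun m => hCc.of_isClosed_subset (hTclosed m) Set.inter_subset_left
  have hTmono : Monotone T := by
    intro a b hab x hx
    exact ⟨hx.1, Set.mem_iInter.2 fun n => hQ'mono hab (Set.mem_iInter.1 hx.2 n)⟩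
  have hTunion : (⋃ m, T m) = C := by
    apply Set.Subset.antisymm
    · exact Set.iUnion_subset fun m => Set.inter_subset_left
    · intro x hx
      obtain ⟨m, hm⟩ := horb' x hx
      exact Set.mem_iUnion.2 ⟨m, hx, Set.mem_iInter.2 hm⟩
  -- some T m has positive measure
  have hCpos : 0 < μ C := by
    refine lt_of_lt_of_le ?_ (measure_mono (interior_subset (s := C)))
    exact IsOpen.measure_pos μ isOpen_interior ⟨1, mem_interior_iff_mem_nhds.2 hCn⟩
  have hsup : 0 < ⨆ m, μ (T m) := by
    rw [← Monotone.measure_iUnion hTmono, hTunion]; exact hCpos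
  obtain ⟨m₀, hm₀⟩ := lt_iSup_iff.1 hsup
  set W : Set G := T m₀ with hWdef
  have hWc : IsCompact W := hTcpt m₀
  have hWpos : 0 < μ W := hm₀
  have hWne : W.Nonempty := by
    rcases Set.eq_empty_or_nonempty W with h | h
    · rw [h] at hWpos; simp at hWpos
    · exact h
  set P : Set G := Q' m₀ with hPdef
  have hPc : IsCompact P := hQ'cpt m₀
  have hconjW : ∀ n : ℕ, ∀ x ∈ W, g n * x * (g n)⁻¹ ∈ P := by
    intro n x hx
    exact Set.mem_iInter.1 hx.2 n
  -- compact set around K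
  obtain ⟨D₀, hD₀c, hKD₀⟩ := exists_compact_superset hKcpt
  set E : Set G := P * D₀ with hEdef
  have hEc : IsCompact E := hPc.mul hD₀c
  have hEfin : μ E < ⊤ := hEc.measure_lt_top
  -- arbitrarily many disjoint right translates of W by elements of H
  have claim : ∀ p : ℕ, ∃ t : Finset G, (t : Set G) ⊆ (H : Set G) ∧ t.card = p ∧
      (t : Set G).PairwiseDisjoint (fun h => W * ({h} : Set G)) := by
    intro p
    induction p with
    | zero => exact ⟨∅, by simp, by simp, by simp⟩
    | succ p ih =>
      obtain ⟨t, htH, htcard, htdisj⟩ := ih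
      set E' : Set G := ⋃ h ∈ t, (W⁻¹ * W) * ({h} : Set G) with hE'def
      have hE'c : IsCompact E' :=
        t.isCompact_biUnion (fun h _ => ((hWc.inv.mul hWc).mul isCompact_singleton))
      obtain ⟨a, haH, haE'⟩ : ∃ a, a ∈ (H : Set G) ∧ a ∉ E' := by
        by_contra hcon
        push_neg at hcon
        exact hHnotsub E' hE'c fun x hx => hcon x hx
      have hone : (1 : G) ∈ W⁻¹ * W := by
        obtain ⟨w, hw⟩ := hWne
        exact ⟨w⁻¹, Set.inv_mem_inv.2 hw, w, hw, inv_mul_cancel w⟩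
      have hmemE' : ∀ h ∈ t, (h : G) ∈ E' := by
        intro h hh
        refine Set.mem_biUnion hh ?_
        exact ⟨1, hone, h, rfl, one_mul h⟩
      have hat : a ∉ t := fun hcon => haE' (hmemE' a hcon)
      have hkey : ∀ b ∈ (t : Set G), a ≠ b → Disjoint (W * ({a} : Set G)) (W * ({b} : Set G)) := by
        intro b hb _
        rw [Set.disjoint_left]
        intro x hx1 hx2
        obtain ⟨w, hw, y, hy, hxy⟩ := hx1
        obtain ⟨w', hw', y', hy', hxy'⟩ := hx2
        have hxy2 : w * y = x := hxy
        have hxy2' : w' * y' = x := hxy'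
        rw [Set.mem_singleton_iff.1 hy] at hxy2
        rw [Set.mem_singleton_iff.1 hy'] at hxy2'
        have heq : w * a = w' * b := by rw [hxy2, hxy2']
        apply haE'
        refine Set.mem_biUnion hb ?_
        refine ⟨w⁻¹ * w', ⟨w⁻¹, Set.inv_mem_inv.2 hw, w', hw', rfl⟩, b, rfl, ?_⟩
        show w⁻¹ * w' * b = a
        calc w⁻¹ * w' * b = w⁻¹ * (w' * b) := by group
          _ = w⁻¹ * (w * a) := by rw [heq]
          _ = a := by group
      refine ⟨insert a t, ?_, ?_, ?_⟩
      · rw [Finset.coe_insert]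
        exact Set.insert_subset haH htH
      · rw [Finset.card_insert_of_notMem hat, htcard]
      · rw [Finset.coe_insert]
        exact htdisj.insert fun b hb hne => hkey b hb hne
  -- choose p large
  obtain ⟨p, hp⟩ : ∃ p : ℕ, μ E / μ W < p :=
    ENNReal.exists_nat_gt (ENNReal.div_lt_top hEfin.ne hWpos.ne').ne
  have hplarge : μ E < p * μ W := by
    rwa [ENNReal.div_lt_iff (Or.inl hWpos.ne') (Or.inl hWc.measure_lt_top.ne)] at hp
  obtain ⟨t, htH, htcard, htdisj⟩ := claim p
  -- apply the compacting hypothesis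
  obtain ⟨n, hn⟩ := (hcompacting (interior D₀) isOpen_interior hKD₀ t htH).exists
  -- the union of translates and its conjugate
  set A : Set G := ⋃ h ∈ t, W * ({h} : Set G) with hAdef
  have htransmeas : ∀ h : G, MeasurableSet (W * ({h} : Set G)) :=
    fun h => ((hWc.mul isCompact_singleton).isClosed).measurableSet
  have htransμ : ∀ h : G, μ (W * ({h} : Set G)) = μ W := by
    intro h
    rw [Set.mul_singleton, Set.image_mul_right]
    exact measure_preimage_mul_right μ h⁻¹ W
  have hμA : μ A = p * μ W := by
    rw [hAdef, measure_biUnion_finset htdisj (fun h _ => htransmeas h)]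
    simp only [htransμ]
    rw [Finset.sum_const, htcard, nsmul_eq_mul]
  set B : Set G := (fun x => (g n)⁻¹ * x * g n) ⁻¹' A with hBdef
  have hμB : μ B = μ A := by
    have hfun : (fun x : G => (g n)⁻¹ * x * g n) =
        (fun y : G => y * g n) ∘ (fun x : G => (g n)⁻¹ * x) := rfl
    rw [hBdef, hfun, Set.preimage_comp, measure_preimage_mul, measure_preimage_mul_right]
  have hBE : B ⊆ E := by
    intro x hx
    have hxA : (g n)⁻¹ * x * g n ∈ A := hx
    obtain ⟨hh, hht, w, hw, y, hy, hwh⟩ := Set.mem_iUnion₂.1 hxA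
    have hwh2 : w * y = (g n)⁻¹ * x * g n := hwh
    rw [Set.mem_singleton_iff.1 hy] at hwh2
    have hx' : x = (g n * w * (g n)⁻¹) * (g n * hh * (g n)⁻¹) := by
      have h1 : (g n)⁻¹ * x * g n = w * hh := hwh2.symm
      have hx2 : x = g n * ((g n)⁻¹ * x * g n) * (g n)⁻¹ := by group
      rw [hx2, h1]; group
    rw [hx']
    exact Set.mul_mem_mul (hconjW n w hw) (interior_subset (hn hh hht))
  have hfinal : (p : ENNReal) * μ W ≤ μ E := by
    calc (p : ENNReal) * μ W = μ A := hμA.symm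
    _ = μ B := hμB.symm
    _ ≤ μ E := measure_mono hBE
  exact lt_irrefl _ (lt_of_lt_of_le hplarge hfinal)
end

section
/- Let G be a σ-compact locally compact Hausdorff group, (gₙ) a sequence in G such that for each g ∈ G the set {gₙ g gₙ⁻¹ : n} is relatively compact, and U ⊆ G a nonempty relatively compact open set. Then the union ⋃ₙ gₙ U gₙ⁻¹ is relatively compact. -/
open scoped Pointwise

/-- Let `G` be a σ-compact locally compact Hausdorff group, `(gₙ)` a sequence in `G` such
that for each `g ∈ G` the set `{gₙ g gₙ⁻¹ : n}` is relatively compact, and `U ⊆ G` a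
nonempty relatively compact open set.  Then `⋃ₙ gₙ U gₙ⁻¹` is relatively compact. -/
theorem iUnion_conj_relatively_compact
    {G : Type*} [Group G] [TopologicalSpace G] [IsTopologicalGroup G]
    [LocallyCompactSpace G] [T2Space G] [SigmaCompactSpace G]
    (g : ℕ → G)
    (hbounded : ∀ x : G, IsCompact (closure (Set.range fun n => g n * x * (g n)⁻¹)))
    (U : Set G) (hUne : U.Nonempty) (hUopen : IsOpen U) (hUcpt : IsCompact (closure U)) :
    IsCompact (closure (⋃ n, (fun x => g n * x * (g n)⁻¹) '' U)) := by
  classical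
  -- compact exhaustion of G
  let K : CompactExhaustion G := CompactExhaustion.choice G
  haveI : LocallyCompactSpace U := hUopen.locallyCompactSpace
  haveI : Nonempty U := hUne.to_subtype
  -- closed sets in the subspace U
  let F : ℕ → Set U := fun m => ⋂ n, (fun x : U => g n * (x : G) * (g n)⁻¹) ⁻¹' (K m)
  have hFclosed : ∀ m, IsClosed (F m) := fun m =>
    isClosed_iInter fun n =>
      ((K.isCompact m).isClosed).preimage
        ((continuous_const.mul continuous_subtype_val).mul continuous_const)
  have hFunion : ⋃ m, F m = Set.univ := by
    ext x
    simp only [Set.mem_iUnion, Set.mem_univ, iff_true]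
    obtain ⟨m, hm⟩ := K.exists_superset_of_isCompact (hbounded (x : G))
    refine ⟨m, Set.mem_iInter.2 fun n => hm ?_⟩
    exact subset_closure ⟨n, rfl⟩
  obtain ⟨m, y, hy⟩ := nonempty_interior_of_iUnion_of_closed hFclosed hFunion
  -- the open set W in G
  let W : Set G := Subtype.val '' interior (F m)
  have hWopen : IsOpen W := hUopen.isOpenMap_subtype_val _ isOpen_interior
  have hWsub : W ⊆ U := by rintro w ⟨z, _, rfl⟩; exact z.2
  have hWconj : ∀ w ∈ W, ∀ n, g n * w * (g n)⁻¹ ∈ K m := by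
    rintro w ⟨z, hz, rfl⟩ n
    exact Set.mem_iInter.1 (interior_subset hz) n
  set v₀ : G := (y : G) with hv₀
  have hv₀W : v₀ ∈ W := ⟨y, hy, rfl⟩
  -- cover closure U by finitely many translates x * v₀⁻¹ * W
  let O : G → Set G := fun x => (fun z => v₀ * x⁻¹ * z) ⁻¹' W
  have hOopen : ∀ x, IsOpen (O x) := fun x =>
    hWopen.preimage (continuous_const.mul continuous_id)
  have hOcover : closure U ⊆ ⋃ x : G, O x := fun x _ =>
    Set.mem_iUnion.2 ⟨x, by simpa [O] using hv₀W⟩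
  obtain ⟨t, ht⟩ := hUcpt.elim_finite_subcover O hOopen hOcover
  -- the big compact set
  let S : Set G := ⋃ x ∈ t, closure (Set.range fun n => g n * (x * v₀⁻¹) * (g n)⁻¹) * K m
  have hScpt : IsCompact S :=
    t.finite_toSet.isCompact_biUnion fun x _ => (hbounded _).mul (K.isCompact m)
  have hsub : (⋃ n, (fun x => g n * x * (g n)⁻¹) '' U) ⊆ S := by
    rintro _ ⟨_, ⟨n, rfl⟩, u, hu, rfl⟩
    obtain ⟨x, hxt, hxO⟩ := Set.mem_iUnion₂.1 (ht (subset_closure hu))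
    have hw : v₀ * x⁻¹ * u ∈ W := hxO
    refine Set.mem_biUnion hxt ?_
    refine ⟨g n * (x * v₀⁻¹) * (g n)⁻¹, subset_closure ⟨n, rfl⟩,
      g n * (v₀ * x⁻¹ * u) * (g n)⁻¹, hWconj _ hw n, ?_⟩
    group
  exact hScpt.of_isClosed_subset isClosed_closure (closure_minimal hsub hScpt.isClosed)
end
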